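/- arXiv:1804.09080 — 4 statements merged into one kernel-verified Lean document; each statement's English description precedes it below -/
import Mathlib

section
/- Let f : M → N be a homomorphism of right R-modules which is C-injective for every module C in a class 𝒞 (i.e., Hom_R(f, C) is surjective for every C ∈ 𝒞). Let D be a module which embeds into a product of modules from 𝒞 and satisfies Ext¹_R(coker f, D) = 0. Then f is D-injective, i.e., Hom_R(f, D) is surjective. -/
open LinearMap

/-- `Ext¹_R(A,B) = 0`: every short exact sequence `0 → B → E → A → 0` of `R`-modules
splits. -/
def Ext1Zero (R : Type) [Ring R] (A B : Type) [AddCommGroup A] [Module R A]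
    [AddCommGroup B] [Module R B] : Prop :=
  ∀ (E : Type) [AddCommGroup E] [Module R E] (i : B →ₗ[R] E) (p : E →ₗ[R] A),
    Function.Injective i → Function.Surjective p → LinearMap.range i = LinearMap.ker p →
    ∃ s : A →ₗ[R] E, p ∘ₗ s = LinearMap.id


/-- If `f : M → N` is `𝒞`-injective (i.e. `Hom(f, C)` is surjective for
every `C ∈ 𝒞`), `D` embeds into a product of modules from `𝒞`, and
`Ext¹(coker f, D) = 0`, then `f` is `D`-injective, i.e. `Hom(f, D)` is surjective. -/
theorem cInjective_of_cogen_of_ext1Zero_coker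
    {R : Type} [Ring R] (𝒞 : Set (ModuleCat.{0} R))
    {M N : Type} [AddCommGroup M] [Module R M] [AddCommGroup N] [Module R N]
    (f : M →ₗ[R] N)
    (hf : ∀ C ∈ 𝒞, ∀ g : M →ₗ[R] ↥C, ∃ h : N →ₗ[R] ↥C, h ∘ₗ f = g)
    (D : Type) [AddCommGroup D] [Module R D]
    (hD : ∃ (ι : Type) (C : ι → ModuleCat.{0} R) (_ : ∀ i, C i ∈ 𝒞)
      (e : D →ₗ[R] ((i : ι) → ↥(C i))), Function.Injective e)
    (hExt : Ext1Zero R (N ⧸ LinearMap.range f) D) :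
    ∀ g : M →ₗ[R] D, ∃ h : N →ₗ[R] D, h ∘ₗ f = g := by
  intro g
  obtain ⟨ι, C, hC, e, he⟩ := hD
  -- extend each component of `e ∘ g` along `f`
  have hcomp : ∀ i : ι, ∃ h : N →ₗ[R] ↥(C i),
      h ∘ₗ f = (LinearMap.proj i) ∘ₗ (e ∘ₗ g) := fun i =>
    hf (C i) (hC i) _
  choose hi hhi using hcomp
  set h' : N →ₗ[R] ((i : ι) → ↥(C i)) := LinearMap.pi hi with h'def
  have h'f : ∀ m : M, h' (f m) = e (g m) := by
    intro m
    funext i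
    simpa [h'def] using LinearMap.congr_fun (hhi i) m
  -- the pushout
  set W : Submodule R (N × D) := LinearMap.range (LinearMap.prod f (-g)) with Wdef
  set Q := (N × D) ⧸ W
  set iD : D →ₗ[R] Q := W.mkQ ∘ₗ LinearMap.inr R N D with iDdef
  set jN : N →ₗ[R] Q := W.mkQ ∘ₗ LinearMap.inl R N D with jNdef
  -- projection to coker f
  have hker : W ≤ LinearMap.ker ((LinearMap.range f).mkQ ∘ₗ LinearMap.fst R N D) := by
    rintro ⟨n, d⟩ ⟨m, hm⟩
    simp only [LinearMap.prod_apply, Pi.prod, Function.prod, Prod.mk.injEq] at hm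
    simp only [LinearMap.mem_ker, LinearMap.comp_apply, LinearMap.fst_apply, ← hm.1]
    rw [Submodule.mkQ_apply, Submodule.Quotient.mk_eq_zero]
    exact ⟨m, rfl⟩
  set p : Q →ₗ[R] (N ⧸ LinearMap.range f) :=
    W.liftQ ((LinearMap.range f).mkQ ∘ₗ LinearMap.fst R N D) hker with pdef
  have pj : ∀ n : N, p (jN n) = Submodule.Quotient.mk n := fun n => rfl
  have piD : ∀ d : D, p (iD d) = 0 := by
    intro d
    show ((LinearMap.range f).mkQ ∘ₗ LinearMap.fst R N D) (0, d) = 0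
    simp
  -- key relation: jN (f m) = iD (g m)
  have hrel : ∀ m : M, jN (f m) = iD (g m) := by
    intro m
    show W.mkQ (f m, 0) = W.mkQ (0, g m)
    rw [← sub_eq_zero, ← map_sub, Submodule.mkQ_apply, Submodule.Quotient.mk_eq_zero]
    exact ⟨m, by simp [Prod.ext_iff]⟩
  -- iD injective
  have hiDinj : Function.Injective iD := by
    rw [← LinearMap.ker_eq_bot]
    rw [Submodule.eq_bot_iff]
    intro d hd
    have : (0, d) ∈ W := by
      have : W.mkQ (0, d) = 0 := hd
      rwa [Submodule.mkQ_apply, Submodule.Quotient.mk_eq_zero] at this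
    obtain ⟨m, hm⟩ := this
    simp only [LinearMap.prod_apply, Pi.prod, Function.prod, LinearMap.neg_apply, Prod.mk.injEq] at hm
    have hgm : g m = 0 := by
      have h1 : h' (f m) = e (g m) := h'f m
      rw [hm.1, map_zero] at h1
      exact he (by simpa using h1.symm)
    rw [← hm.2, hgm, neg_zero]
  -- p surjective
  have hpsurj : Function.Surjective p := by
    intro x
    obtain ⟨n, rfl⟩ := Submodule.mkQ_surjective _ x
    exact ⟨jN n, pj n⟩
  -- range iD = ker p
  have hrange : LinearMap.range iD = LinearMap.ker p := by
    apply le_antisymm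
    · rintro _ ⟨d, rfl⟩
      exact piD d
    · rintro q hq
      obtain ⟨⟨n, d⟩, rfl⟩ := Submodule.mkQ_surjective W q
      have hn : n ∈ LinearMap.range f := by
        have : ((LinearMap.range f).mkQ ∘ₗ LinearMap.fst R N D) (n, d) = 0 := hq
        simpa [Submodule.Quotient.mk_eq_zero] using this
      obtain ⟨m, rfl⟩ := hn
      refine ⟨d + g m, ?_⟩
      show W.mkQ (0, d + g m) = W.mkQ (f m, d)
      rw [← sub_eq_zero, ← map_sub, Submodule.mkQ_apply, Submodule.Quotient.mk_eq_zero]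
      exact ⟨-m, by simp [Prod.ext_iff]⟩
  -- apply Ext vanishing
  obtain ⟨s, hs⟩ := hExt Q iD p hiDinj hpsurj hrange
  -- build the retraction π : Q → D
  set k : Q →ₗ[R] Q := LinearMap.id - s ∘ₗ p with kdef
  have hk : ∀ q : Q, k q ∈ LinearMap.range iD := by
    intro q
    rw [hrange, LinearMap.mem_ker]
    have := LinearMap.congr_fun hs (p q)
    simp only [LinearMap.comp_apply, LinearMap.id_apply] at this ⊢
    simp [kdef, this]
  set eiD := LinearEquiv.ofInjective iD hiDinj with eiDdef
  set π : Q →ₗ[R] D := (eiD.symm : LinearMap.range iD →ₗ[R] D) ∘ₗ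
    k.codRestrict (LinearMap.range iD) hk with πdef
  have hπ : ∀ d : D, π (iD d) = d := by
    intro d
    have hkid : k (iD d) = iD d := by
      simp [kdef, piD d]
    have : (k.codRestrict (LinearMap.range iD) hk) (iD d) = eiD d := by
      apply Subtype.ext
      simpa [eiDdef, LinearEquiv.ofInjective_apply] using hkid
    simp [πdef, this, eiDdef]
  refine ⟨π ∘ₗ jN, ?_⟩
  ext m
  simp only [LinearMap.comp_apply]
  rw [hrel m, hπ]
end

section
/- Let 𝒞 be a class of right R-modules, σ a limit ordinal, and (M_α, f_{βα} : M_α → M_β | α < β ≤ σ) a continuous well-ordered direct system of modules (meaning M_θ = colim_{α<θ} M_α for each limit ordinal θ ≤ σ) such that M_α ∈ ⊥𝒞 and the map f_{α+1,α} is 𝒞-injective for all α < σ. Then M_σ ∈ ⊥𝒞, i.e., Ext¹_R(M_σ, C) = 0 for all C ∈ 𝒞. -/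
open LinearMap

theorem lift_of_ext1Zero {R A B T E : Type} [Ring R] [AddCommGroup A] [Module R A]
    [AddCommGroup B] [Module R B] [AddCommGroup T] [Module R T]
    [AddCommGroup E] [Module R E]
    (hext : Ext1Zero R A B) (i : B →ₗ[R] E) (p : E →ₗ[R] T)
    (hi : Function.Injective i) (hp : Function.Surjective p)
    (hr : LinearMap.range i = LinearMap.ker p) (g : A →ₗ[R] T) :
    ∃ t : A →ₗ[R] E, p ∘ₗ t = g := by
  classical
  set q : A × E →ₗ[R] T := g ∘ₗ (LinearMap.fst R A E) - p ∘ₗ (LinearMap.snd R A E) with hq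
  set E' : Submodule R (A × E) := LinearMap.ker q with hE'
  have mem_E' : ∀ x : A × E, x ∈ E' ↔ g x.1 = p x.2 := by
    intro x; simp [hE', hq, LinearMap.mem_ker, sub_eq_zero]
  set i' : B →ₗ[R] E' := LinearMap.codRestrict E' (LinearMap.prod 0 i) (by
    intro b
    rw [mem_E']
    have hb : p (i b) = 0 := by
      rw [← LinearMap.mem_ker, ← hr]; exact ⟨b, rfl⟩
    simp [hb]) with hi'def
  set p' : E' →ₗ[R] A := (LinearMap.fst R A E) ∘ₗ E'.subtype with hp'def
  have hi' : Function.Injective i' := by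
    intro b1 b2 h
    have h2 := congrArg (fun x : E' => (x : A × E).2) h
    simp [hi'def] at h2
    exact hi h2
  have hp' : Function.Surjective p' := by
    intro a
    obtain ⟨e, he⟩ := hp (g a)
    exact ⟨⟨(a, e), (mem_E' _).2 he.symm⟩, rfl⟩
  have hr' : LinearMap.range i' = LinearMap.ker p' := by
    ext x
    simp only [LinearMap.mem_range, LinearMap.mem_ker]
    constructor
    · rintro ⟨b, rfl⟩; simp [hi'def, hp'def]
    · intro hx
      have hx1 : (x : A × E).1 = 0 := hx
      have hx2 : (x : A × E).2 ∈ LinearMap.ker p := by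
        have := (mem_E' x).1 x.2
        rw [hx1] at this
        simp [LinearMap.mem_ker, ← this]
      rw [← hr] at hx2
      obtain ⟨b, hb⟩ := hx2
      refine ⟨b, ?_⟩
      apply Subtype.ext
      apply Prod.ext
      · simp [hi'def, hx1]
      · simp [hi'def, hb]
  obtain ⟨s, hs⟩ := hext E' i' p' hi' hp' hr'
  refine ⟨(LinearMap.snd R A E) ∘ₗ E'.subtype ∘ₗ s, ?_⟩
  ext a
  have h1 : p' (s a) = a := DFunLike.congr_fun hs a
  have h2 : g ((s a : A × E)).1 = p ((s a : A × E)).2 := (mem_E' _).1 (s a).2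
  have h3 : ((s a : A × E)).1 = a := h1
  simp only [LinearMap.comp_apply, Submodule.subtype_apply, LinearMap.snd_apply,
    LinearMap.id_coe, id_eq]
  rw [← h2, h3]

theorem factor_of_comp_zero {R B D E T : Type} [Ring R] [AddCommGroup B] [Module R B]
    [AddCommGroup D] [Module R D] [AddCommGroup E] [Module R E]
    [AddCommGroup T] [Module R T]
    (i : B →ₗ[R] E) (p : E →ₗ[R] T) (hi : Function.Injective i)
    (hr : LinearMap.range i = LinearMap.ker p)
    (d : D →ₗ[R] E) (hd : p ∘ₗ d = 0) :
    ∃ g : D →ₗ[R] B, i ∘ₗ g = d := by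
  have hmem : ∀ x, d x ∈ LinearMap.range i := by
    intro x
    rw [hr, LinearMap.mem_ker]
    exact DFunLike.congr_fun hd x
  refine ⟨(LinearEquiv.ofInjective i hi).symm.toLinearMap ∘ₗ
    LinearMap.codRestrict (LinearMap.range i) d hmem, ?_⟩
  ext x
  simp only [LinearMap.comp_apply, LinearEquiv.coe_coe, LinearMap.codRestrict_apply]
  have h := congrArg (Subtype.val) ((LinearEquiv.ofInjective i hi).apply_symm_apply ⟨d x, hmem x⟩)
  rw [LinearEquiv.ofInjective_apply] at h
  exact h

/-- **generalized Eklof lemma.** Let `𝒞` be a class of modules, `σ` a limit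
ordinal and `(M α, f β α | α ≤ β ≤ σ)` a continuous well-ordered direct system (continuity
is expressed by the universal property of the colimit at every limit ordinal `θ ≤ σ`) such
that `M α ∈ ⊥𝒞` and `f (α+1) α` is `𝒞`-injective for all `α < σ`. Then `M σ ∈ ⊥𝒞`. -/
theorem ext1Zero_of_continuous_chain
    {R : Type} [Ring R] (𝒞 : Set (ModuleCat.{0} R)) (σ : Ordinal) (hσ : Order.IsSuccLimit σ)
    (M : Ordinal → Type) [∀ α, AddCommGroup (M α)] [∀ α, Module R (M α)]
    (f : ∀ α β, α ≤ β → β ≤ σ → (M α →ₗ[R] M β))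
    (hid : ∀ (α) (h : α ≤ σ), f α α le_rfl h = LinearMap.id)
    (hcomp : ∀ (α β γ) (h1 : α ≤ β) (h2 : β ≤ γ) (h3 : γ ≤ σ),
      (f β γ h2 h3) ∘ₗ (f α β h1 (h2.trans h3)) = f α γ (h1.trans h2) h3)
    (hcont : ∀ (θ : Ordinal) (hθσ : θ ≤ σ), Order.IsSuccLimit θ →
      ∀ (C : Type) [AddCommGroup C] [Module R C] (g : ∀ α, α < θ → (M α →ₗ[R] C)),
        (∀ (α β) (hαβ : α ≤ β) (hβ : β < θ),
          (g β hβ) ∘ₗ (f α β hαβ (hβ.le.trans hθσ)) = g α (lt_of_le_of_lt hαβ hβ)) →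
        ∃! h : M θ →ₗ[R] C, ∀ (α) (hα : α < θ), h ∘ₗ (f α θ hα.le hθσ) = g α hα)
    (hperp : ∀ (α) (_ : α < σ), ∀ C ∈ 𝒞, Ext1Zero R (M α) ↥C)
    (hinj : ∀ (α) (_ : α < σ) (h1 : α ≤ α + 1) (h2 : α + 1 ≤ σ), ∀ C ∈ 𝒞,
      ∀ g : M α →ₗ[R] ↥C, ∃ h : M (α + 1) →ₗ[R] ↥C, h ∘ₗ (f α (α + 1) h1 h2) = g) :
    ∀ C ∈ 𝒞, Ext1Zero R (M σ) ↥C := by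
  intro C hC
  intro E _ _ i p hi hp hrange
  classical
  set F : ∀ α : Ordinal, (∀ β, β < α → (β ≤ σ → (M β →ₗ[R] E))) → (α ≤ σ → (M α →ₗ[R] E)) :=
    fun α prev hα =>
      if H : ∃ s : M α →ₗ[R] E, p ∘ₗ s = f α σ hα le_rfl ∧
          ∀ β (hβ : β < α), s ∘ₗ f β α hβ.le hα = prev β hβ (hβ.le.trans hα)
      then H.choose else 0
    with hF
  set S : ∀ α : Ordinal, α ≤ σ → (M α →ₗ[R] E) := Ordinal.lt_wf.fix F with hSdef
  have hSeq : ∀ α, S α = F α (fun β _ => S β) := by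
    intro α
    rw [hSdef]
    exact Ordinal.lt_wf.fix_eq F α
  have key : ∀ α : Ordinal, ∀ hα : α ≤ σ,
      (p ∘ₗ S α hα = f α σ hα le_rfl) ∧
      ∀ β (hβ : β < α), (S α hα) ∘ₗ f β α hβ.le hα = S β (hβ.le.trans hα) := by
    intro α
    induction α using Ordinal.induction with
    | h α IH =>
    intro hα
    suffices H : ∃ s : M α →ₗ[R] E, p ∘ₗ s = f α σ hα le_rfl ∧
        ∀ β (hβ : β < α), s ∘ₗ f β α hβ.le hα = S β (hβ.le.trans hα) by
      have hGoal : S α hα = H.choose := by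
        have e1 : S α hα = F α (fun β _ => S β) hα := congrFun (hSeq α) hα
        rw [e1]
        exact dif_pos H
      rw [hGoal]
      exact ⟨H.choose_spec.1, H.choose_spec.2⟩
    rcases Ordinal.zero_or_succ_or_isSuccLimit α with h0 | ⟨β, hβsucc⟩ | hlim
    · subst h0
      obtain ⟨t, ht⟩ := lift_of_ext1Zero (hperp 0 hσ.pos C hC) i p hi hp hrange
        (f 0 σ hα le_rfl)
      exact ⟨t, ht, fun β hβ => absurd hβ (not_lt_zero (a := β))⟩
    · have h' : α = β + 1 := hβsucc.symm.trans (Ordinal.add_one_eq_succ β).symm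
      subst h'
      have hlt : β < β + 1 := by
        rw [Ordinal.add_one_eq_succ]; exact Order.lt_succ β
      have hβσ : β ≤ σ := hlt.le.trans hα
      have hβltσ : β < σ := lt_of_lt_of_le hlt hα
      have hα' : β + 1 < σ := by
        rw [Ordinal.add_one_eq_succ]; exact hσ.succ_lt hβltσ
      obtain ⟨hpS, hcompS⟩ := IH β hlt hβσ
      obtain ⟨t, ht⟩ := lift_of_ext1Zero (hperp (β+1) hα' C hC) i p hi hp hrange
        (f (β+1) σ hα le_rfl)
      set d : M β →ₗ[R] E := t ∘ₗ f β (β+1) hlt.le hα - S β hβσ with hd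
      have hpd : p ∘ₗ d = 0 := by
        have h1 : p ∘ₗ (t ∘ₗ f β (β+1) hlt.le hα) = f β σ hβσ le_rfl := by
          rw [← LinearMap.comp_assoc, ht, hcomp]
        rw [hd, LinearMap.comp_sub, h1, hpS, sub_self]
      obtain ⟨g, hg⟩ := factor_of_comp_zero i p hi hrange d hpd
      obtain ⟨h, hh⟩ := hinj β hβltσ hlt.le hα C hC g
      have hpi : p ∘ₗ i = 0 := by
        ext b
        have : i b ∈ LinearMap.ker p := hrange ▸ LinearMap.mem_range_self i b
        exact this
      refine ⟨t - i ∘ₗ h, ?_, ?_⟩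
      · rw [LinearMap.comp_sub, ht, ← LinearMap.comp_assoc, hpi, LinearMap.zero_comp,
          sub_zero]
      · intro γ hγ
        have hγβ : γ ≤ β := by
          rw [Ordinal.add_one_eq_succ] at hγ
          exact Order.lt_succ_iff.1 hγ
        have hstep : (t - i ∘ₗ h) ∘ₗ f β (β+1) hlt.le hα = S β hβσ := by
          rw [LinearMap.sub_comp, LinearMap.comp_assoc, hh, hg, hd, sub_sub_cancel]
        have hfact : f γ (β+1) hγ.le hα = f β (β+1) hlt.le hα ∘ₗ f γ β hγβ hβσ :=
          (hcomp γ β (β+1) hγβ hlt.le hα).symm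
        rw [hfact, ← LinearMap.comp_assoc, hstep]
        rcases eq_or_lt_of_le hγβ with rfl | hlt'
        · rw [hid]
          exact LinearMap.comp_id _
        · exact hcompS γ hlt'
    · have hcp : ∀ (γ β) (hγβ : γ ≤ β) (hβ : β < α),
          S β (hβ.le.trans hα) ∘ₗ f γ β hγβ (hβ.le.trans hα)
            = S γ (hγβ.trans (hβ.le.trans hα)) := by
        intro γ β hγβ hβ
        rcases eq_or_lt_of_le hγβ with rfl | hlt'
        · rw [hid]
          exact LinearMap.comp_id _
        · exact (IH β hβ (hβ.le.trans hα)).2 γ hlt'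
      obtain ⟨h, hh, -⟩ := hcont α hα hlim E (fun β hβ => S β (hβ.le.trans hα))
        (fun γ β hγβ hβ => hcp γ β hγβ hβ)
      have hph : p ∘ₗ h = f α σ hα le_rfl := by
        obtain ⟨h', hh', huniq⟩ := hcont α hα hlim (M σ)
          (fun β hβ => f β σ (hβ.le.trans hα) le_rfl)
          (fun γ β hγβ hβ => hcomp γ β σ hγβ (hβ.le.trans hα) le_rfl)
        have e1 := huniq (p ∘ₗ h) ?_
        · have e2 := huniq (f α σ hα le_rfl) ?_
          · rw [e1, e2]
          · intro β hβ
            exact hcomp β α σ hβ.le hα le_rfl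
        · intro β hβ
          rw [LinearMap.comp_assoc, hh β hβ]
          exact (IH β hβ (hβ.le.trans hα)).1
      exact ⟨h, hph, fun β hβ => hh β hβ⟩
  obtain ⟨hfinal, -⟩ := key σ le_rfl
  refine ⟨S σ le_rfl, ?_⟩
  rw [hfinal, hid]
end

section
/- Let 𝒞 be a class of right R-modules which is thick (closed under direct summands, extensions, kernels of epimorphisms and cokernels of monomorphisms within 𝒞) and closed under transfinite extensions (filtrations). Then 𝒞 is closed under direct limits of directed systems. -/
set_option maxHeartbeats 1600000
set_option synthInstance.maxHeartbeats 400000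

open LinearMap Submodule
open scoped DirectSum

namespace Statement15

universe u

variable {R : Type} [Ring R]





/-- Bundled closure properties of the class `𝒞`. -/
structure Pkg (R : Type) [Ring R] (𝒞 : Set (ModuleCat.{0} R)) : Prop where
  hsum : ∀ (M : ModuleCat.{0} R), M ∈ 𝒞 → ∀ (N : Type) [AddCommGroup N] [Module R N]
      (i : N →ₗ[R] ↥M) (r : ↥M →ₗ[R] N), r ∘ₗ i = LinearMap.id →
      ModuleCat.of R N ∈ 𝒞
  hker : ∀ (A B : ModuleCat.{0} R), A ∈ 𝒞 → B ∈ 𝒞 → ∀ (f : ↥A →ₗ[R] ↥B),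
      Function.Surjective f → ModuleCat.of R ↥(LinearMap.ker f) ∈ 𝒞
  hcok : ∀ (A B : ModuleCat.{0} R), A ∈ 𝒞 → B ∈ 𝒞 → ∀ (f : ↥A →ₗ[R] ↥B),
      Function.Injective f → ModuleCat.of R (↥B ⧸ LinearMap.range f) ∈ 𝒞
  hfil : ∀ (M : Type) [AddCommGroup M] [Module R M] (σ : Ordinal.{u})
      (F : Ordinal.{u} → Submodule R M),
      (∀ α β, α ≤ β → F α ≤ F β) → F 0 = ⊥ → F σ = ⊤ →
      (∀ θ, θ ≤ σ → Order.IsSuccLimit θ → F θ = ⨆ (α : Ordinal) (_ : α < θ), F α) →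
      (∀ α, α < σ →
        ModuleCat.of R (↥(F (α + 1)) ⧸ Submodule.comap (F (α + 1)).subtype (F α)) ∈ 𝒞) →
      ModuleCat.of R M ∈ 𝒞
  hzero : ModuleCat.of R PUnit ∈ 𝒞

variable {𝒞 : Set (ModuleCat.{0} R)}

/-- `𝒞` is closed under isomorphism. -/
lemma Pkg.iso (P : Pkg R 𝒞) (M : ModuleCat.{0} R) (hM : M ∈ 𝒞)
    {Y : Type} [AddCommGroup Y] [Module R Y] (e : ↥M ≃ₗ[R] Y) :
    ModuleCat.of R Y ∈ 𝒞 :=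
  P.hsum M hM Y e.symm.toLinearMap e.toLinearMap (by ext y; simp)

lemma Pkg.iso' (P : Pkg R 𝒞) {X : Type} [AddCommGroup X] [Module R X]
    (hX : ModuleCat.of R X ∈ 𝒞)
    {Y : Type} [AddCommGroup Y] [Module R Y] (e : X ≃ₗ[R] Y) :
    ModuleCat.of R Y ∈ 𝒞 :=
  P.iso (ModuleCat.of R X) hX e

lemma Pkg.zero (P : Pkg R 𝒞) (Z : Type) [AddCommGroup Z] [Module R Z]
    (hz : Subsingleton Z) : ModuleCat.of R Z ∈ 𝒞 :=
  P.iso' P.hzero (LinearEquiv.ofLinear (0 : PUnit →ₗ[R] Z) (0 : Z →ₗ[R] PUnit)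
    (LinearMap.ext fun z => Subsingleton.elim _ _)
    (LinearMap.ext fun z => Subsingleton.elim _ _))

/-- quotients of a member by a member submodule are members -/
lemma Pkg.quot (P : Pkg R 𝒞) {M : Type} [AddCommGroup M] [Module R M]
    {p q : Submodule R M} (hpq : p ≤ q)
    (hp : ModuleCat.of R ↥p ∈ 𝒞) (hq : ModuleCat.of R ↥q ∈ 𝒞) :
    ModuleCat.of R (↥q ⧸ comap q.subtype p) ∈ 𝒞 := by
  have h := P.hcok (ModuleCat.of R ↥p) (ModuleCat.of R ↥q) hp hq
      (Submodule.inclusion hpq) (Submodule.inclusion_injective hpq)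
  exact P.iso' h (Submodule.quotEquivOfEq _ _ (Submodule.range_inclusion p q hpq))

/-- the shape of quotients appearing in `hfil` when the filtration is pulled
back from an ambient module. -/
lemma Pkg.quotshape (P : Pkg R 𝒞) {M : Type} [AddCommGroup M] [Module R M]
    {p q T : Submodule R M} (hpq : p ≤ q) (hqT : q ≤ T)
    (hp : ModuleCat.of R ↥p ∈ 𝒞) (hq : ModuleCat.of R ↥q ∈ 𝒞) :
    ModuleCat.of R
      (↥(comap T.subtype q) ⧸ comap (comap T.subtype q).subtype (comap T.subtype p)) ∈ 𝒞 := by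
  have base := P.quot hpq hp hq
  let E : ↥(comap T.subtype q) ≃ₗ[R] ↥q := Submodule.comapSubtypeEquivOfLe hqT
  let ψ : ↥(comap T.subtype q) →ₗ[R] (↥q ⧸ comap q.subtype p) :=
    (comap q.subtype p).mkQ ∘ₗ (E : ↥(comap T.subtype q) →ₗ[R] ↥q)
  have hsurj : Function.Surjective ψ :=
    (Submodule.mkQ_surjective _).comp E.surjective
  have hker : LinearMap.ker ψ = comap (comap T.subtype q).subtype (comap T.subtype p) := by
    ext x
    simp only [ψ, E, LinearMap.mem_ker, LinearMap.comp_apply, LinearEquiv.coe_coe,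
      Submodule.Quotient.mk_eq_zero, Submodule.mkQ_apply, Submodule.mem_comap,
      Submodule.comapSubtypeEquivOfLe_apply_coe]
    rfl
  have := P.iso' base (LinearMap.quotKerEquivOfSurjective ψ hsurj).symm
  rwa [hker] at this



lemma ord_lt_add_one (ξ : Ordinal.{u}) : ξ < ξ + 1 := by
  rw [Ordinal.add_one_eq_succ]; exact Order.lt_succ ξ

/-- Filtration criterion, phrased with a chain of submodules of an ambient module. -/
lemma Pkg.filt (P : Statement15.Pkg.{u} R 𝒞) {M : Type} [AddCommGroup M] [Module R M]
    (T : Submodule R M) (σ : Ordinal.{u}) (W : Ordinal.{u} → Submodule R M)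
    (Wmono : ∀ α β, α ≤ β → W α ≤ W β) (W0 : W 0 = ⊥) (Wtop : W σ = T)
    (Wcont : ∀ θ, θ ≤ σ → Order.IsSuccLimit θ → W θ = ⨆ (α : Ordinal.{u}) (_ : α < θ), W α)
    (Wquot : ∀ ξ, ξ < σ → ModuleCat.of R
      (↥(comap T.subtype (W (ξ + 1))) ⧸
        comap (comap T.subtype (W (ξ + 1))).subtype (comap T.subtype (W ξ))) ∈ 𝒞) :
    ModuleCat.of R ↥T ∈ 𝒞 := by
  apply P.hfil ↥T σ (fun ξ => comap T.subtype (W ξ))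
  · exact fun α β h => comap_mono (Wmono α β h)
  · rw [W0, Submodule.comap_bot, Submodule.ker_subtype]
  · rw [Wtop, Submodule.comap_subtype_self]
  · intro θ hθσ hlim
    rw [Wcont θ hθσ hlim]
    apply le_antisymm
    · intro x hx
      have hx' : (x : M) ∈ ⨆ (α : Ordinal), ⨆ (_ : α < θ), W α := hx
      rw [iSup_subtype'] at hx'
      haveI : Nonempty {α : Ordinal // α < θ} := ⟨⟨0, hlim.pos⟩⟩
      have hdir : Directed (· ≤ ·) (fun α : {α : Ordinal // α < θ} => W α.1) := by
        intro a b
        rcases le_total a.1 b.1 with h | h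
        · exact ⟨b, Wmono _ _ h, le_rfl⟩
        · exact ⟨a, le_rfl, Wmono _ _ h⟩
      obtain ⟨⟨α, hα⟩, hmem⟩ := (Submodule.mem_iSup_of_directed _ hdir).1 hx'
      have : x ∈ comap T.subtype (W α) := hmem
      exact le_iSup₂ (f := fun (α : Ordinal) (_ : α < θ) => comap T.subtype (W α)) α hα this
    · exact iSup₂_le fun α hα =>
        comap_mono (le_iSup₂ (f := fun (α : Ordinal) (_ : α < θ) => W α) α hα)
  · exact Wquot

/-- If a submodule `T` of an ambient module is the top of a continuous increasing
ordinal-indexed chain of submodules, each of which is a member of `𝒞`, then `T`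
is a member of `𝒞`. -/
lemma Pkg.chain (P : Statement15.Pkg.{u} R 𝒞) {M : Type} [AddCommGroup M] [Module R M]
    (T : Submodule R M) (σ : Ordinal.{u}) (hσ : Order.IsSuccLimit σ) (W : Ordinal.{u} → Submodule R M)
    (Wmono : ∀ α β, α ≤ β → W α ≤ W β) (W0 : W 0 = ⊥) (Wtop : W σ = T)
    (Wcont : ∀ θ, θ ≤ σ → Order.IsSuccLimit θ → W θ = ⨆ (α : Ordinal.{u}) (_ : α < θ), W α)
    (Wmem : ∀ ξ, ξ < σ → ModuleCat.of R ↥(W ξ) ∈ 𝒞) :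
    ModuleCat.of R ↥T ∈ 𝒞 := by
  have hWT : ∀ ξ, ξ ≤ σ → W ξ ≤ T := fun ξ h => Wtop ▸ Wmono ξ σ h
  apply P.filt T σ W Wmono W0 Wtop Wcont
  intro ξ hξ
  have hξ1 : ξ + 1 < σ := by
    rw [Ordinal.add_one_eq_succ]; exact hσ.succ_lt hξ
  exact P.quotshape (Wmono ξ (ξ + 1) (ord_lt_add_one ξ).le) (hWT (ξ + 1) hξ1.le)
    (Wmem ξ hξ) (Wmem (ξ + 1) hξ1)


/-- The submodule of a direct sum consisting of elements supported in `s`. -/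
def suppSM {R : Type} [Ring R] {X : Type} (A : X → Type)
    [∀ x, AddCommGroup (A x)] [∀ x, Module R (A x)] (s : Set X) :
    Submodule R (⨁ x, A x) where
  carrier := {v | ∀ y, v y ≠ 0 → y ∈ s}
  add_mem' := by
    intro a b ha hb y hy
    by_contra hys
    have h1 : a y = 0 := by by_contra h; exact hys (ha y h)
    have h2 : b y = 0 := by by_contra h; exact hys (hb y h)
    rw [DirectSum.add_apply, h1, h2, add_zero] at hy
    exact hy rfl
  zero_mem' := by
    intro y hy
    rw [DirectSum.zero_apply] at hy
    exact absurd rfl hy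
  smul_mem' := by
    intro c v hv y hy
    apply hv y
    intro h0
    rw [DirectSum.smul_apply, h0, smul_zero] at hy
    exact hy rfl

lemma mem_suppSM {X : Type} (A : X → Type)
    [∀ x, AddCommGroup (A x)] [∀ x, Module R (A x)] (s : Set X) (v : ⨁ x, A x) :
    v ∈ suppSM (R := R) A s ↔ ∀ y, v y ≠ 0 → y ∈ s := Iff.rfl

lemma Pkg.supp (P : Statement15.Pkg.{u} R 𝒞) (X : Type) (A : X → Type)
    [∀ x, AddCommGroup (A x)] [∀ x, Module R (A x)]
    (hA : ∀ x, ModuleCat.of R (A x) ∈ 𝒞) (s : Set X) :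
    ModuleCat.of R ↥(suppSM (R := R) A s) ∈ 𝒞 := by
  classical
  set r : ULift.{u} X → ULift.{u} X → Prop := WellOrderingRel with hr
  haveI : IsWellOrder (ULift.{u} X) r := WellOrderingRel.isWellOrder
  set σ := Ordinal.type r with hσ
  set ty : X → Ordinal.{u} := fun y => Ordinal.typein r (ULift.up y) with hty
  set W : Ordinal.{u} → Submodule R (⨁ x, A x) :=
    fun ξ => suppSM A (s ∩ {y | ty y < ξ}) with hW
  have Wmono : ∀ α β, α ≤ β → W α ≤ W β := by
    intro α β h v hv y hy
    exact ⟨(hv y hy).1, show ty y < β from lt_of_lt_of_le (hv y hy).2 h⟩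
  have W0 : W 0 = ⊥ := by
    rw [eq_bot_iff]
    intro v hv
    rw [Submodule.mem_bot]
    refine DirectSum.ext_component R fun y => ?_
    rw [map_zero]
    by_contra h
    exact not_lt_zero (show ty y < 0 from (hv y h).2)
  have Wtop : W σ = suppSM A s := by
    apply le_antisymm
    · exact fun v hv y hy => (hv y hy).1
    · exact fun v hv y hy => ⟨hv y hy, Ordinal.typein_lt_type r _⟩
  have Wcont : ∀ θ, θ ≤ σ → Order.IsSuccLimit θ →
      W θ = ⨆ (α : Ordinal.{u}) (_ : α < θ), W α := by
    intro θ _ hlim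
    apply le_antisymm
    · intro v hv
      set β := (DFinsupp.support v).sup (fun y => ty y + 1) with hβ
      have hβθ : β < θ := by
        rw [hβ]
        apply Finset.sup_lt_iff (by exact hlim.pos) |>.2
        intro y hy
        have := (hv y (DFinsupp.mem_support_iff.1 hy)).2
        rw [Ordinal.add_one_eq_succ]
        exact hlim.succ_lt this
      have hvβ : v ∈ W β := by
        intro y hy
        refine ⟨(hv y hy).1, ?_⟩
        calc ty y < ty y + 1 := ord_lt_add_one _
        _ ≤ β := Finset.le_sup (f := fun y => ty y + 1) (DFinsupp.mem_support_iff.2 hy)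
      exact le_iSup₂ (f := fun (α : Ordinal) (_ : α < θ) => W α) β hβθ hvβ
    · exact iSup₂_le fun α hα => Wmono α θ hα.le
  apply P.filt (suppSM A s) σ W Wmono W0 Wtop Wcont
  intro ξ hξ
  by_cases hex : ∃ y₀, y₀ ∈ s ∧ ty y₀ = ξ
  · obtain ⟨y₀, hy₀s, hy₀⟩ := hex
    set T := suppSM (R := R) A s
    set ψ : ↥(comap T.subtype (W (ξ + 1))) →ₗ[R] A y₀ :=
      (DirectSum.component R X A y₀) ∘ₗ (T.subtype ∘ₗ (comap T.subtype (W (ξ + 1))).subtype)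
      with hψ
    have hψval : ∀ x, ψ x = (((x : ↥T) : ⨁ x, A x)) y₀ := fun x => rfl
    have hsurj : Function.Surjective ψ := by
      intro b
      have hmemb : (DirectSum.lof R X A y₀ b) ∈ T := by
        intro y hy
        by_contra hys
        rw [DirectSum.lof_eq_of, DirectSum.of_eq_of_ne _ _ _
          (by intro h; subst h; exact hys hy₀s)] at hy
        exact hy rfl
      have hmemb2 : (DirectSum.lof R X A y₀ b) ∈ W (ξ + 1) := by
        intro y hy
        have hyy : y = y₀ := by
          by_contra hys
          rw [DirectSum.lof_eq_of, DirectSum.of_eq_of_ne _ _ _ hys] at hy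
          exact hy rfl
        constructor
        · rw [hyy]; exact hy₀s
        · show ty y < ξ + 1
          rw [hyy, hy₀]
          exact ord_lt_add_one ξ
      refine ⟨⟨⟨DirectSum.lof R X A y₀ b, hmemb⟩, hmemb2⟩, ?_⟩
      rw [hψval]
      exact DirectSum.component.lof_self (R := R) y₀ b
    have hkerψ : LinearMap.ker ψ =
        comap (comap T.subtype (W (ξ + 1))).subtype (comap T.subtype (W ξ)) := by
      ext x
      rw [LinearMap.mem_ker, hψval]
      constructor
      · intro h0
        intro y hy
        have hy1 : y ∈ s ∧ ty y < ξ + 1 := ⟨(x.2 y hy).1, (x.2 y hy).2⟩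
        refine ⟨hy1.1, ?_⟩
        rcases lt_or_eq_of_le (by
          have := hy1.2
          rwa [Ordinal.add_one_eq_succ, Order.lt_succ_iff] at this) with h | h
        · exact h
        · exfalso
          have : y = y₀ := by
            have h2 : ty y = ty y₀ := by rw [h, hy₀]
            have := Ordinal.typein_injective r h2
            exact ULift.up_injective this
          subst this
          exact hy h0
      · intro hmem
        by_contra h0
        have h2 : ty y₀ < ξ := (hmem y₀ h0).2
        rw [hy₀] at h2
        exact absurd h2 (lt_irrefl ξ)
    have e := @LinearMap.quotKerEquivOfSurjective _ _ _ _ (@Submodule.addCommGroup _ _ _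
      (Submodule.addCommGroup T) _ (comap T.subtype (W (ξ + 1)))) _ _ _ ψ hsurj
    have h1 := P.iso' (hA y₀) e.symm
    rwa [hkerψ] at h1
  · have heq : W (ξ + 1) = W ξ := by
      apply le_antisymm
      · intro v hv y hy
        refine ⟨(hv y hy).1, show ty y < ξ from ?_⟩
        have h2 : ty y < ξ + 1 := (hv y hy).2
        rw [Ordinal.add_one_eq_succ, Order.lt_succ_iff] at h2
        rcases lt_or_eq_of_le h2 with h | h
        · exact h
        · exact absurd ⟨(hv y hy).1, h⟩ (fun hc => hex ⟨y, hc⟩)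
      · exact Wmono ξ (ξ + 1) (ord_lt_add_one ξ).le
    apply P.zero
    rw [heq, Submodule.comap_subtype_self]
    infer_instance

lemma Pkg.directSum (P : Statement15.Pkg.{u} R 𝒞) (X : Type) (A : X → Type)
    [∀ x, AddCommGroup (A x)] [∀ x, Module R (A x)]
    (hA : ∀ x, ModuleCat.of R (A x) ∈ 𝒞) :
    ModuleCat.of R (⨁ x, A x) ∈ 𝒞 := by
  have h := P.supp X A hA Set.univ
  have htop : suppSM (R := R) A Set.univ = ⊤ := by
    rw [eq_top_iff]
    intro v _ y _
    exact Set.mem_univ y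
  exact P.iso' h ((LinearEquiv.ofEq _ _ htop).trans Submodule.topEquiv)

/-- A directed union (indexed supremum) of submodules belonging to `𝒞` belongs to `𝒞`. -/
lemma Pkg.dUnion (P : Statement15.Pkg.{u} R 𝒞) (κ : Cardinal.{u}) :
    ∀ (M : Type) [AddCommGroup M] [Module R M] (ι' : Type u) (sub : ι' → Submodule R M),
      Cardinal.mk ι' ≤ κ →
      (∀ a b : ι', ∃ c, sub a ≤ sub c ∧ sub b ≤ sub c) →
      (∀ a, ModuleCat.of R ↥(sub a) ∈ 𝒞) →
      ModuleCat.of R ↥(⨆ a, sub a) ∈ 𝒞 := by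
  induction κ using WellFoundedLT.induction with
  | _ κ IH =>
  intro M _ _ ι' sub hcard hdir hmem
  rcases lt_or_eq_of_le hcard with hlt | heq
  · exact IH _ hlt M ι' sub le_rfl hdir hmem
  subst heq
  clear hcard
  rcases finite_or_infinite ι' with hfin | hinf
  · -- finite index type: the family has a top element (or is empty)
    rcases isEmpty_or_nonempty ι' with he | hne
    · have hbot : (⨆ a, sub a) = ⊥ := by rw [iSup_of_empty]
      rw [hbot]
      exact P.zero _ inferInstance
    · haveI := Fintype.ofFinite ι'
      obtain ⟨c, hc⟩ : ∃ c, ∀ a, sub a ≤ sub c := by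
        have key : ∀ (t : Finset ι'), ∃ c, ∀ a ∈ t, sub a ≤ sub c := by
          intro t
          classical
          induction t using Finset.induction_on with
          | empty => exact ⟨Classical.arbitrary ι', by simp⟩
          | @insert x t hx ih =>
            obtain ⟨c0, hc0⟩ := ih
            obtain ⟨c1, h1, h2⟩ := hdir x c0
            refine ⟨c1, fun a ha => ?_⟩
            rcases Finset.mem_insert.1 ha with rfl | ha
            · exact h1
            · exact (hc0 a ha).trans h2
        obtain ⟨c, hc⟩ := key Finset.univ
        exact ⟨c, fun a => hc a (Finset.mem_univ a)⟩
      have htop : (⨆ a, sub a) = sub c := le_antisymm (iSup_le hc) (le_iSup _ c)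
      rw [htop]
      exact hmem c
  · have hℵ : Cardinal.aleph0 ≤ Cardinal.mk ι' := Cardinal.infinite_iff.1 hinf
    choose uu hu1 hu2 using hdir
    rcases eq_or_lt_of_le hℵ with hcnt | hunc
    · -- countably infinite
      haveI : Countable ι' := Cardinal.mk_le_aleph0_iff.1 (le_of_eq hcnt.symm)
      obtain ⟨g, hg⟩ := exists_surjective_nat ι'
      let c : ℕ → ι' := fun n => Nat.rec (g 0) (fun n cn => uu cn (g (n + 1))) n
      have hcs : ∀ n, c (n + 1) = uu (c n) (g (n + 1)) := fun n => rfl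
      have hmono : Monotone (fun n => sub (c n)) := by
        apply monotone_nat_of_le_succ
        intro n
        rw [hcs]
        exact hu1 _ _
      have hgc : ∀ n, sub (g n) ≤ sub (c n) := by
        intro n
        cases n with
        | zero => exact le_rfl
        | succ n => rw [hcs]; exact hu2 _ _
      set W : Ordinal.{u} → Submodule R M :=
        fun ξ => ⨆ (n : ℕ) (_ : (n : Ordinal.{u}) < ξ), sub (c n) with hW
      have Wmono : ∀ α β, α ≤ β → W α ≤ W β := by
        intro α β h
        exact iSup₂_le fun n hn =>
          le_iSup₂ (f := fun (n : ℕ) (_ : (n : Ordinal.{u}) < β) => sub (c n)) n (hn.trans_le h)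
      have Wsucc : ∀ n : ℕ, W ((n : Ordinal.{u}) + 1) = sub (c n) := by
        intro n
        apply le_antisymm
        · apply iSup₂_le
          intro m hm
          apply hmono
          have : (m : Ordinal.{u}) < (n : Ordinal.{u}) + 1 := hm
          rw [Ordinal.add_one_eq_succ, Order.lt_succ_iff, Nat.cast_le] at this
          exact this
        · exact le_iSup₂ (f := fun (m : ℕ) (_ : (m : Ordinal.{u}) < (n : Ordinal.{u}) + 1) =>
            sub (c m)) n (ord_lt_add_one _)
      apply P.chain (⨆ a, sub a) Ordinal.omega0 Ordinal.isSuccLimit_omega0 W Wmono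
      · apply le_antisymm
        · apply iSup₂_le
          intro n hn
          exact absurd hn not_lt_zero
        · exact bot_le
      · apply le_antisymm
        · exact iSup₂_le fun n _ => le_iSup sub (c n)
        · apply iSup_le
          intro a
          obtain ⟨n, rfl⟩ := hg a
          exact le_trans (hgc n) (le_iSup₂ (f := fun (n : ℕ) (_ : (n : Ordinal.{u}) < Ordinal.omega0) =>
            sub (c n)) n (Ordinal.nat_lt_omega0 n))
      · intro θ hθ hlim
        have hθω : θ = Ordinal.omega0 := le_antisymm hθ (Ordinal.omega0_le_of_isSuccLimit hlim)
        subst hθω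
        apply le_antisymm
        · apply iSup₂_le
          intro n _
          have h1 : sub (c n) ≤ W ((n : Ordinal.{u}) + 1) := (Wsucc n).symm.le
          refine h1.trans ?_
          refine le_iSup₂ (f := fun (α : Ordinal.{u}) (_ : α < Ordinal.omega0) => W α)
            ((n : Ordinal.{u}) + 1) ?_
          have : ((n : Ordinal.{u}) + 1) = ((n + 1 : ℕ) : Ordinal.{u}) := by push_cast; rfl
          rw [this]
          exact Ordinal.nat_lt_omega0 (n + 1)
        · exact iSup₂_le fun α hα => Wmono α _ hα.le
      · intro ξ hξ
        obtain ⟨n, rfl⟩ := Ordinal.lt_omega0.1 hξ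
        cases n with
        | zero =>
          have : W ((0 : ℕ) : Ordinal.{u}) = ⊥ := by
            apply le_antisymm
            · apply iSup₂_le
              intro m hm
              rw [Nat.cast_zero] at hm
              exact absurd hm not_lt_zero
            · exact bot_le
          rw [this]
          exact P.zero _ inferInstance
        | succ n =>
          have : ((n + 1 : ℕ) : Ordinal.{u}) = (n : Ordinal.{u}) + 1 := by push_cast; rfl
          rw [this, Wsucc n]
          exact hmem (c n)
    · -- uncountable
      set κ₀ := Cardinal.mk ι' with hκ₀
      have hord : Order.IsSuccLimit κ₀.ord := Cardinal.isSuccLimit_ord hℵ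
      obtain ⟨e⟩ : Nonempty (κ₀.ord.ToType ≃ ι') :=
        Cardinal.eq.1 (by rw [Cardinal.mk_toType, Cardinal.card_ord])
      -- closure machinery
      let itr : Set ι' → ℕ → Set ι' :=
        fun X n => Nat.rec X (fun _ Y => Y ∪ Set.image2 uu Y Y) n
      have hitrs : ∀ X n, itr X (n + 1) = itr X n ∪ Set.image2 uu (itr X n) (itr X n) :=
        fun _ _ => rfl
      let cl : Set ι' → Set ι' := fun X => ⋃ (n : ULift.{u} ℕ), itr X n.down
      have hsub : ∀ X, X ⊆ cl X := fun X =>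
        Set.subset_iUnion (fun (n : ULift.{u} ℕ) => itr X n.down) (ULift.up 0)
      have hitrn : ∀ X m n, m ≤ n → itr X m ⊆ itr X n := by
        intro X m n h
        induction n with
        | zero => rw [Nat.le_zero.1 h]
        | succ n ih =>
          rcases Nat.le_succ_iff.1 h with h' | h'
          · exact (ih h').trans (by rw [hitrs]; exact Set.subset_union_left)
          · rw [h']
      have hcl : ∀ X a b, a ∈ cl X → b ∈ cl X → uu a b ∈ cl X := by
        intro X a b ha hb
        obtain ⟨sa, ⟨m, rfl⟩, hma⟩ := ha
        obtain ⟨sb, ⟨n, rfl⟩, hnb⟩ := hb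
        have hma' : a ∈ itr X (max m.down n.down) := hitrn X _ _ (le_max_left _ _) hma
        have hnb' : b ∈ itr X (max m.down n.down) := hitrn X _ _ (le_max_right _ _) hnb
        refine Set.mem_iUnion.2 ⟨ULift.up (max m.down n.down + 1), ?_⟩
        rw [hitrs]
        exact Set.mem_union_right _ (Set.mem_image2_of_mem hma' hnb')
      have hitrX : ∀ n, Monotone (fun X => itr X n) := by
        intro n
        induction n with
        | zero => exact fun X Y h => h
        | succ n ih =>
          intro X Y h
          show itr X (n + 1) ⊆ itr Y (n + 1)
          rw [hitrs, hitrs]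
          exact Set.union_subset_union (ih h) (Set.image2_subset (ih h) (ih h))
      have hclX : Monotone cl := by
        intro X Y h
        apply Set.iUnion_mono
        intro n
        exact hitrX n.down h
      have hitrcard : ∀ X n, Cardinal.mk (↥(itr X n)) ≤ max (Cardinal.mk (↥X)) Cardinal.aleph0 := by
        intro X n
        set t := max (Cardinal.mk (↥X)) Cardinal.aleph0 with ht
        have hℵt : Cardinal.aleph0 ≤ t := le_max_right _ _
        induction n with
        | zero => exact le_max_left _ _
        | succ n ih =>
          rw [hitrs]
          calc Cardinal.mk (↥(itr X n ∪ Set.image2 uu (itr X n) (itr X n)))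
              ≤ Cardinal.mk (↥(itr X n)) + Cardinal.mk (↥(Set.image2 uu (itr X n) (itr X n))) :=
                Cardinal.mk_union_le _ _
            _ ≤ t + t * t := by
                refine add_le_add ih ((Cardinal.mk_image2_le).trans ?_)
                exact mul_le_mul' ih ih
            _ = t + t := by rw [Cardinal.mul_eq_self hℵt]
            _ = t := Cardinal.add_eq_self hℵt
      have hclcard : ∀ X, Cardinal.mk (↥(cl X)) ≤ max (Cardinal.mk (↥X)) Cardinal.aleph0 := by
        intro X
        refine (Cardinal.mk_iUnion_le _).trans ?_
        have h1 : Cardinal.mk (ULift.{u} ℕ) = Cardinal.aleph0 := Cardinal.mk_denumerable _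
        rw [h1]
        have h2 : ⨆ (n : ULift.{u} ℕ), Cardinal.mk (↥(itr X n.down)) ≤
            max (Cardinal.mk (↥X)) Cardinal.aleph0 := ciSup_le' (fun n => hitrcard X n.down)
        calc Cardinal.aleph0 * (⨆ (n : ULift.{u} ℕ), Cardinal.mk (↥(itr X n.down)))
            ≤ Cardinal.aleph0 * max (Cardinal.mk (↥X)) Cardinal.aleph0 := mul_le_mul' le_rfl h2
          _ ≤ (max (Cardinal.mk (↥X)) Cardinal.aleph0) * (max (Cardinal.mk (↥X)) Cardinal.aleph0) :=
              mul_le_mul' (le_max_right _ _) le_rfl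
          _ = max (Cardinal.mk (↥X)) Cardinal.aleph0 := Cardinal.mul_eq_self (le_max_right _ _)
      -- the filtration
      haveI hwo : IsWellOrder κ₀.ord.ToType (· < ·) := isWellOrder_lt
      set ty : ι' → Ordinal.{u} :=
        fun a => Ordinal.typein (α := κ₀.ord.ToType) (· < ·) (e.symm a) with hty
      set base : Ordinal.{u} → Set ι' := fun ξ => {a | ty a < ξ} with hbase
      set S : Ordinal.{u} → Set ι' := fun ξ => cl (base ξ) with hS
      set W : Ordinal.{u} → Submodule R M :=
        fun ξ => ⨆ (a : ι') (_ : a ∈ S ξ), sub a with hW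
      have basemono : ∀ α β, α ≤ β → base α ⊆ base β :=
        fun α β h a ha => show ty a < β from lt_of_lt_of_le ha h
      have Wmono : ∀ α β, α ≤ β → W α ≤ W β := by
        intro α β h
        exact iSup₂_le fun a ha =>
          le_iSup₂ (f := fun (a : ι') (_ : a ∈ S β) => sub a) a (hclX (basemono α β h) ha)
      apply P.chain (⨆ a, sub a) κ₀.ord hord W Wmono
      · -- W 0 = ⊥
        have hempty : base 0 = ∅ := by
          ext a
          simp only [hbase, Set.mem_setOf_eq, Set.mem_empty_iff_false, iff_false]
          exact not_lt_zero
        have hitre : ∀ n, itr (∅ : Set ι') n = ∅ := by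
          intro n
          induction n with
          | zero => rfl
          | succ n ih => rw [hitrs, ih]; simp
        have hcle : S 0 = ∅ := by
          show cl (base 0) = ∅
          rw [hempty]
          apply Set.eq_empty_iff_forall_notMem.2
          intro a ha
          obtain ⟨sa, ⟨m, rfl⟩, hma⟩ := ha
          have hma' : a ∈ itr ∅ m.down := hma
          rw [hitre m.down] at hma'
          exact hma'
        apply le_antisymm
        · apply iSup₂_le
          intro a ha
          rw [hcle] at ha
          exact absurd ha (Set.notMem_empty a)
        · exact bot_le
      · -- W κ₀.ord = ⨆ sub
        apply le_antisymm
        · exact iSup₂_le fun a _ => le_iSup sub a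
        · apply iSup_le
          intro a
          refine le_iSup₂ (f := fun (a : ι') (_ : a ∈ S κ₀.ord) => sub a) a ?_
          apply hsub
          exact Ordinal.typein_lt_self (e.symm a)
      · -- continuity
        intro θ hθ hlim
        have hbaseU : base θ = ⋃ (α : {α : Ordinal.{u} // α < θ}), base α.1 := by
          ext a
          simp only [Set.mem_iUnion]
          constructor
          · intro ha
            refine ⟨⟨ty a + 1, ?_⟩, show ty a < ty a + 1 from ord_lt_add_one _⟩
            rw [Ordinal.add_one_eq_succ]
            exact hlim.succ_lt (show ty a < θ from ha)
          · rintro ⟨⟨α, hα⟩, ha⟩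
            exact show ty a < θ from lt_trans (show ty a < α from ha) hα
        have hitrU : ∀ n, itr (base θ) n ⊆ ⋃ (α : {α : Ordinal.{u} // α < θ}), itr (base α.1) n := by
          intro n
          induction n with
          | zero =>
            rw [hbaseU]
            exact fun a ha => ha
          | succ n ih =>
            rw [hitrs]
            rintro x (hx | hx)
            · obtain ⟨sα, ⟨α, rfl⟩, hα⟩ := ih hx
              exact Set.mem_iUnion.2 ⟨α, hitrn _ n (n+1) (Nat.le_succ n) hα⟩
            · rw [Set.mem_image2] at hx
              obtain ⟨a, ha, b, hb, rfl⟩ := hx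
              obtain ⟨sα, ⟨α, rfl⟩, hα⟩ := ih ha
              obtain ⟨sβ, ⟨β, rfl⟩, hβ⟩ := ih hb
              have hγ : max α.1 β.1 < θ := max_lt α.2 β.2
              refine Set.mem_iUnion.2 ⟨⟨max α.1 β.1, hγ⟩, ?_⟩
              rw [hitrs]
              apply Set.mem_union_right
              refine Set.mem_image2_of_mem ?_ ?_
              · exact hitrX n (basemono _ _ (le_max_left _ _)) hα
              · exact hitrX n (basemono _ _ (le_max_right _ _)) hβ
        have hSU : S θ ⊆ ⋃ (α : {α : Ordinal.{u} // α < θ}), S α.1 := by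
          intro a ha
          obtain ⟨sa, ⟨m, rfl⟩, hma⟩ := ha
          obtain ⟨sα, ⟨α, rfl⟩, hα⟩ := hitrU m.down hma
          exact Set.mem_iUnion.2 ⟨α, Set.mem_iUnion.2 ⟨m, hα⟩⟩
        apply le_antisymm
        · apply iSup₂_le
          intro a ha
          obtain ⟨sα, ⟨α, rfl⟩, hα⟩ := hSU ha
          refine le_trans ?_ (le_iSup₂ (f := fun (γ : Ordinal.{u}) (_ : γ < θ) => W γ) α.1 α.2)
          exact le_iSup₂ (f := fun (a : ι') (_ : a ∈ S α.1) => sub a) a hα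
        · exact iSup₂_le fun α hα => Wmono α θ hα.le
      · -- members
        intro ξ hξ
        have hbcard : Cardinal.mk (↥(base ξ)) < κ₀ := by
          have hξ' : ξ < Ordinal.type (α := κ₀.ord.ToType) (· < ·) := by
            rw [Ordinal.type_toType]
            exact hξ
          obtain ⟨p₀, hp₀⟩ := Ordinal.typein_surj (α := κ₀.ord.ToType) (· < ·) hξ'
          have hinj : Function.Injective
              (fun a : base ξ => (⟨e.symm a.1, by
                have h2 : ty a.1 < Ordinal.typein (α := κ₀.ord.ToType) (· < ·) p₀ := by
                  rw [hp₀]; exact a.2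
                exact (Ordinal.typein_lt_typein (α := κ₀.ord.ToType) (· < ·)).1 h2⟩ :
                Set.Iio p₀)) := by
            intro a b hab
            have := congrArg Subtype.val hab
            simp only at this
            exact Subtype.ext (e.symm.injective this)
          calc Cardinal.mk (↥(base ξ)) ≤ Cardinal.mk (↥(Set.Iio p₀)) := Cardinal.mk_le_of_injective hinj
            _ < κ₀ := Cardinal.mk_Iio_ord_toType p₀
        have hScard : Cardinal.mk (↥(S ξ)) < κ₀ := by
          refine lt_of_le_of_lt (hclcard (base ξ)) ?_
          exact max_lt hbcard hunc
        have hiso : W ξ = ⨆ (x : {a : ι' // a ∈ S ξ}), sub x.1 := by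
          rw [hW]
          exact iSup_subtype'
        rw [hiso]
        refine IH (Cardinal.mk {a : ι' // a ∈ S ξ}) ?_ M {a : ι' // a ∈ S ξ}
          (fun x => sub x.1) le_rfl ?_ (fun x => hmem x.1)
        · exact hScard
        · intro a b
          exact ⟨⟨uu a.1 b.1, hcl _ _ _ a.2 b.2⟩, hu1 _ _, hu2 _ _⟩


end Statement15


/-- A class `𝒞` of `R`-modules which is thick (closed under direct
summands, extensions, kernels of epimorphisms and cokernels of monomorphisms within `𝒞`)
and closed under transfinite extensions (filtrations) is closed under direct limits of
directed systems. -/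
theorem thick_filtrationClosed_closed_under_directLimits
    {R : Type} [Ring R] (𝒞 : Set (ModuleCat.{0} R))
    -- closed under direct summands (hence under isomorphisms)
    (hsum : ∀ (M : ModuleCat.{0} R), M ∈ 𝒞 → ∀ (N : Type) [AddCommGroup N] [Module R N]
      (i : N →ₗ[R] ↥M) (r : ↥M →ₗ[R] N), r ∘ₗ i = LinearMap.id →
      ModuleCat.of R N ∈ 𝒞)
    -- closed under extensions
    (hext : ∀ (A C : ModuleCat.{0} R), A ∈ 𝒞 → C ∈ 𝒞 →
      ∀ (B : Type) [AddCommGroup B] [Module R B] (f : ↥A →ₗ[R] B) (g : B →ₗ[R] ↥C),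
        Function.Injective f → Function.Surjective g →
        LinearMap.range f = LinearMap.ker g → ModuleCat.of R B ∈ 𝒞)
    -- closed under kernels of epimorphisms between members
    (hker : ∀ (A B : ModuleCat.{0} R), A ∈ 𝒞 → B ∈ 𝒞 → ∀ (f : ↥A →ₗ[R] ↥B),
      Function.Surjective f → ModuleCat.of R ↥(LinearMap.ker f) ∈ 𝒞)
    -- closed under cokernels of monomorphisms between members
    (hcok : ∀ (A B : ModuleCat.{0} R), A ∈ 𝒞 → B ∈ 𝒞 → ∀ (f : ↥A →ₗ[R] ↥B),
      Function.Injective f → ModuleCat.of R (↥B ⧸ LinearMap.range f) ∈ 𝒞)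
    -- closed under filtrations
    (hfil : ∀ (M : Type) [AddCommGroup M] [Module R M] (σ : Ordinal)
      (F : Ordinal → Submodule R M),
      (∀ α β, α ≤ β → F α ≤ F β) → F 0 = ⊥ → F σ = ⊤ →
      (∀ θ, θ ≤ σ → Order.IsSuccLimit θ → F θ = ⨆ (α : Ordinal) (_ : α < θ), F α) →
      (∀ α, α < σ →
        ModuleCat.of R (↥(F (α + 1)) ⧸ Submodule.comap (F (α + 1)).subtype (F α)) ∈ 𝒞) →
      ModuleCat.of R M ∈ 𝒞) :
    -- conclusion: closed under direct limits
    ∀ (ι : Type) [Preorder ι] [IsDirected ι (· ≤ ·)] [DecidableEq ι] [Nonempty ι]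
      (G : ι → ModuleCat.{0} R) (f : ∀ i j, i ≤ j → (↥(G i) →ₗ[R] ↥(G j))),
      DirectedSystem (fun i => ↥(G i)) (fun i j h => f i j h) →
      (∀ i, G i ∈ 𝒞) →
      ModuleCat.of R (Module.DirectLimit (fun i => ↥(G i)) f) ∈ 𝒞 := by
  intro ι _ _ _ _ G f hsys hG
  haveI := hsys
  classical
  obtain ⟨i₀⟩ := (inferInstance : Nonempty ι)
  have hzero : ModuleCat.of R PUnit ∈ 𝒞 :=
    hsum (G i₀) (hG i₀) PUnit 0 0 (LinearMap.ext fun z => Subsingleton.elim _ _)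
  let P : Statement15.Pkg R 𝒞 := ⟨hsum, hker, hcok, hfil, hzero⟩
  set A : ι → Type := fun i => ↥(G i) with hA
  have hAmem : ∀ i, ModuleCat.of R (A i) ∈ 𝒞 := fun i =>
    P.iso (G i) (hG i) (LinearEquiv.refl R (A i))
  -- the direct sum is in 𝒞
  have hD : ModuleCat.of R (⨁ i, A i) ∈ 𝒞 := P.directSum ι A hAmem
  -- the "sum of the transition maps" linear maps
  let φ : ∀ i, (⨁ j, A j) →ₗ[R] A i := fun i =>
    DirectSum.toModule R ι (A i) (fun j => if h : j ≤ i then f j i h else 0)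
  have hφof : ∀ i j (b : A j), φ i (DirectSum.lof R ι A j b) =
      if h : j ≤ i then f j i h b else 0 := by
    intro i j b
    show (DirectSum.toModule R ι (A i) (fun j => if h : j ≤ i then f j i h else 0))
      (DirectSum.lof R ι A j b) = _
    rw [DirectSum.toModule_lof]
    split_ifs with h
    · rfl
    · rfl
  have hrep : ∀ (x : ⨁ j, A j), x = ∑ y ∈ DFinsupp.support x, DirectSum.lof R ι A y (x y) := by
    intro x
    simp only [DirectSum.lof_eq_of]
    exact (DirectSum.sum_support_of x).symm
  have hφsum : ∀ i (x : ⨁ j, A j), (∀ y, x y ≠ 0 → y ≤ i) →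
      ∀ k (hik : i ≤ k), φ k x = f i k hik (φ i x) := by
    intro i x hx k hik
    conv_lhs => rw [hrep x]
    conv_rhs => rw [hrep x]
    rw [map_sum, map_sum, map_sum]
    apply Finset.sum_congr rfl
    intro y hy
    have hyi : y ≤ i := hx y (DFinsupp.mem_support_iff.1 hy)
    rw [hφof, hφof, dif_pos hyi, dif_pos (hyi.trans hik)]
    exact (Module.DirectedSystem.map_map f hyi hik (x y)).symm
  -- the support submodules
  let Dle : ι → Submodule R (⨁ j, A j) := fun i => Statement15.suppSM A {j | j ≤ i}
  have hDle : ∀ i, ModuleCat.of R ↥(Dle i) ∈ 𝒞 := fun i => P.supp ι A hAmem _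
  let ψ : ∀ i, ↥(Dle i) →ₗ[R] A i := fun i => (φ i) ∘ₗ (Dle i).subtype
  -- the partial kernels
  let K' : ι → Submodule R (⨁ j, A j) := fun i =>
    Submodule.map (Dle i).subtype (LinearMap.ker (ψ i))
  have hK'iff : ∀ i x, x ∈ K' i ↔ (∀ y, x y ≠ 0 → y ≤ i) ∧ φ i x = 0 := by
    intro i x
    constructor
    · rintro ⟨⟨y, hy⟩, hk, rfl⟩
      exact ⟨hy, hk⟩
    · rintro ⟨h1, h2⟩
      exact ⟨⟨x, h1⟩, h2, rfl⟩
  have hK'mem : ∀ i, ModuleCat.of R ↥(K' i) ∈ 𝒞 := by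
    intro i
    have hsurj : Function.Surjective (ψ i) := by
      intro b
      have hmem1 : DirectSum.lof R ι A i b ∈ Dle i := by
        intro y hy
        by_contra hyi
        rw [DirectSum.lof_eq_of, DirectSum.of_eq_of_ne _ _ _ (by intro h; subst h; exact hyi le_rfl)] at hy
        exact hy rfl
      refine ⟨⟨_, hmem1⟩, ?_⟩
      show φ i (DirectSum.lof R ι A i b) = b
      rw [hφof, dif_pos le_rfl]
      exact Module.DirectedSystem.map_self f b
    have hk := P.hker (ModuleCat.of R ↥(Dle i)) (G i) (hDle i) (hG i) (ψ i) hsurj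
    exact P.iso' hk
      (Submodule.equivMapOfInjective _ (Submodule.injective_subtype _) (LinearMap.ker (ψ i)))
  have hK'dir : ∀ i j, i ≤ j → K' i ≤ K' j := by
    intro i j hij x hx
    obtain ⟨h1, h2⟩ := (hK'iff i x).1 hx
    refine (hK'iff j x).2 ⟨fun y hy => (h1 y hy).trans hij, ?_⟩
    rw [hφsum i x h1 j hij, h2, map_zero]
  -- the kernel
  set K : Submodule R (⨁ j, A j) := ⨆ i, K' i with hK
  have hKmem : ModuleCat.of R ↥K ∈ 𝒞 := by
    have hKeq : (⨆ i : ULift.{u_1} ι, K' i.down) = K := by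
      apply le_antisymm
      · exact iSup_le fun i => le_iSup K' i.down
      · exact iSup_le fun i => le_iSup (fun i : ULift.{u_1} ι => K' i.down) (ULift.up i)
    rw [← hKeq]
    refine P.dUnion (Cardinal.mk (ULift.{u_1} ι)) (⨁ j, A j) (ULift.{u_1} ι)
      (fun i => K' i.down) le_rfl ?_ (fun i => hK'mem i.down)
    intro a b
    obtain ⟨k, hak, hbk⟩ := exists_ge_ge a.down b.down
    exact ⟨ULift.up k, hK'dir _ _ hak, hK'dir _ _ hbk⟩
  -- K is the defining span of the direct limit
  have hKspan : K = Submodule.span R { a | ∃ (i j : ι) (H : i ≤ j) (x : A i),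
      DirectSum.lof R ι A i x - DirectSum.lof R ι A j (f i j H x) = a } := by
    apply le_antisymm
    · apply iSup_le
      intro i x hx
      obtain ⟨h1, h2⟩ := (hK'iff i x).1 hx
      have key : x - DirectSum.lof R ι A i (φ i x) ∈ Submodule.span R
          { a | ∃ (i j : ι) (H : i ≤ j) (x : A i),
            DirectSum.lof R ι A i x - DirectSum.lof R ι A j (f i j H x) = a } := by
        have hsplit : x - DirectSum.lof R ι A i (φ i x) =
            ∑ y ∈ (DFinsupp.support x).attach, (DirectSum.lof R ι A y.1 (x y.1)
              - DirectSum.lof R ι A i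
                (f y.1 i (h1 y.1 (DFinsupp.mem_support_iff.1 y.2)) (x y.1))) := by
          rw [Finset.sum_sub_distrib]
          have e1 : ∑ y ∈ (DFinsupp.support x).attach, DirectSum.lof R ι A y.1 (x y.1) = x := by
            rw [Finset.sum_attach _ (fun y => DirectSum.lof R ι A y (x y))]
            exact (hrep x).symm
          have e2 : ∑ y ∈ (DFinsupp.support x).attach, DirectSum.lof R ι A i
              (f y.1 i (h1 y.1 (DFinsupp.mem_support_iff.1 y.2)) (x y.1)) =
              DirectSum.lof R ι A i (φ i x) := by
            rw [← map_sum]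
            congr 1
            conv_rhs => rw [hrep x]
            rw [map_sum, ← Finset.sum_attach (DFinsupp.support x)
              (fun y => φ i (DirectSum.lof R ι A y (x y)))]
            apply Finset.sum_congr rfl
            intro y _
            rw [hφof, dif_pos (h1 y.1 (DFinsupp.mem_support_iff.1 y.2))]
          rw [e1, e2]
        rw [hsplit]
        apply Submodule.sum_mem
        intro y _
        apply Submodule.subset_span
        exact ⟨y.1, i, h1 y.1 (DFinsupp.mem_support_iff.1 y.2), x y.1, rfl⟩
      rwa [h2, map_zero, sub_zero] at key
    · rw [Submodule.span_le]
      rintro a ⟨i, j, H, xx, rfl⟩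
      refine Set.mem_of_subset_of_mem ?_ ((hK'iff j _).2 ⟨?_, ?_⟩)
      · exact le_iSup K' j
      · intro y hy
        by_contra hyj
        have e1 : (DirectSum.lof R ι A i xx) y = 0 := by
          rw [DirectSum.lof_eq_of, DirectSum.of_eq_of_ne _ _ _ (by intro h; subst h; exact hyj H)]
        have e2 : (DirectSum.lof R ι A j (f i j H xx)) y = 0 := by
          rw [DirectSum.lof_eq_of, DirectSum.of_eq_of_ne _ _ _ (by intro h; subst h; exact hyj le_rfl)]
        rw [DirectSum.sub_apply, e1, e2, sub_zero] at hy
        exact hy rfl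
      · rw [map_sub, hφof, hφof, dif_pos H, dif_pos le_rfl,
          Module.DirectedSystem.map_self f (i := j)]
        exact sub_self _
  -- conclude
  have hfinal := P.hcok (ModuleCat.of R ↥K) (ModuleCat.of R (⨁ j, A j)) hKmem hD
    K.subtype (Submodule.injective_subtype K)
  refine P.iso' hfinal ?_
  have hre : LinearMap.range K.subtype = Submodule.span R { a | ∃ (i j : ι) (H : i ≤ j) (x : A i),
      DirectSum.lof R ι A i x - DirectSum.lof R ι A j (f i j H x) = a } := by
    rw [Submodule.range_subtype]; exact hKspan
  set Sp := Submodule.span R { a | ∃ (i j : ι) (H : i ≤ j) (x : A i),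
      DirectSum.lof R ι A i x - DirectSum.lof R ι A j (f i j H x) = a } with hSp
  have hle : Sp ≤ LinearMap.ker (DirectSum.toModule R ι (Module.DirectLimit A f)
      (fun i => Module.DirectLimit.of R ι A f i)) := by
    rw [hSp, Submodule.span_le]
    rintro a ⟨i, j, H, xx, rfl⟩
    simp [Module.DirectLimit.of_f]
  have e2 : ((⨁ j, A j) ⧸ Sp) ≃ₗ[R] Module.DirectLimit A f := by
   refine LinearEquiv.ofLinear (Sp.liftQ _ hle)
     (Module.DirectLimit.lift R ι A f (fun i => Sp.mkQ ∘ₗ DirectSum.lof R ι A i) ?_) ?_ ?_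
   · intro i j hij x
     simp only [LinearMap.comp_apply, Submodule.mkQ_apply]
     rw [eq_comm, Submodule.Quotient.eq]
     exact Submodule.subset_span ⟨i, j, hij, x, rfl⟩
   · apply Module.DirectLimit.hom_ext
     intro i
     ext x
     simp
   · apply Submodule.linearMap_qext
     apply DirectSum.linearMap_ext
     intro i
     ext x
     simp
  exact (Submodule.quotEquivOfEq _ _ hre).trans e2
end

section
/- Let 𝒲 = ⊥𝒢ℐ be the left Ext-orthogonal of the class of Gorenstein injective right R-modules, and suppose (𝒲, 𝒲⊥) is a complete hereditary cotorsion pair whose kernel 𝒲 ∩ 𝒲⊥ is the class of injective modules. Then 𝒲⊥ ⊆ 𝒢ℐ, i.e., every module G with Ext¹_R(W, G) = 0 for all W ∈ 𝒲 is Gorenstein injective. -/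
open LinearMap

/-- `G` is a Gorenstein injective `R`-module: a cocycle in a totally acyclic complex of
injective modules, i.e. an acyclic complex of injectives which stays exact after applying
`Hom_R(Q, −)` for every injective module `Q`. -/
def IsGorensteinInjective (R : Type) [Ring R] (G : Type) [AddCommGroup G] [Module R G] :
    Prop :=
  ∃ (E : ℤ → ModuleCat.{0} R) (d : ∀ n : ℤ, ↥(E n) →ₗ[R] ↥(E (n + 1))),
    (∀ n, Module.Injective R ↥(E n)) ∧
    (∀ n, LinearMap.range (d n) = LinearMap.ker (d (n + 1))) ∧
    (∀ (Q : Type) [AddCommGroup Q] [Module R Q], Module.Injective R Q →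
      ∀ (n : ℤ) (h : Q →ₗ[R] ↥(E (n + 1))), (d (n + 1)) ∘ₗ h = 0 →
        ∃ k : Q →ₗ[R] ↥(E n), (d n) ∘ₗ k = h) ∧
    Nonempty (G ≃ₗ[R] LinearMap.ker (d 0))

/-- Membership of the class `𝒲 = ⊥𝒢ℐ`. -/
def MemPerpGI (R : Type) [Ring R] (W : Type) [AddCommGroup W] [Module R W] : Prop :=
  ∀ (G : Type) [AddCommGroup G] [Module R G], IsGorensteinInjective R G → Ext1Zero R W G

/-- Membership of the class `𝒲⊥ = (⊥𝒢ℐ)⊥`. -/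
def MemPerpGIPerp (R : Type) [Ring R] (B : Type) [AddCommGroup B] [Module R B] : Prop :=
  ∀ (W : Type) [AddCommGroup W] [Module R W], MemPerpGI R W → Ext1Zero R W B


section Aux

variable {R : Type} [Ring R]

/-- transfer `Ext1Zero` along an equivalence in the second argument -/
theorem ext1Zero_of_equiv {W B B' : Type} [AddCommGroup W] [Module R W]
    [AddCommGroup B] [Module R B] [AddCommGroup B'] [Module R B']
    (h : Ext1Zero R W B) (e : B ≃ₗ[R] B') : Ext1Zero R W B' := by
  intro X _ _ i p hi hp hex
  refine h X (i ∘ₗ (e : B →ₗ[R] B')) p (hi.comp e.injective) hp ?_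
  rw [range_comp, LinearEquiv.range, Submodule.map_top, hex]

theorem ext1Zero_of_injective {W E : Type} [AddCommGroup W] [Module R W]
    [AddCommGroup E] [Module R E] (hE : Module.Injective R E) : Ext1Zero R W E := by
  intro X _ _ i p hi hp hex
  obtain ⟨r, hr⟩ := hE.out i hi LinearMap.id
  set q : X →ₗ[R] X := LinearMap.id - i ∘ₗ r with hq
  have hq0 : ∀ x ∈ ker p, q x = 0 := by
    rintro x hx
    rw [← hex] at hx
    obtain ⟨b, rfl⟩ := hx
    simp [hq, hr b]
  have hpq : ∀ x, p (q x) = p x := by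
    intro x
    have : i (r x) ∈ ker p := by rw [← hex]; exact ⟨r x, rfl⟩
    simp only [hq, LinearMap.sub_apply, LinearMap.id_apply, LinearMap.comp_apply, map_sub]
    rw [mem_ker] at this
    simp [this]
  set pbar : (X ⧸ ker p) →ₗ[R] W := Submodule.liftQ (ker p) p (le_refl _) with hpbar
  have hinj : Function.Injective pbar := by
    rw [← LinearMap.ker_eq_bot, hpbar, Submodule.ker_liftQ_eq_bot _ _ _ (le_refl _)]
  have hsurj : Function.Surjective pbar := by
    intro w
    obtain ⟨x, rfl⟩ := hp w
    exact ⟨Submodule.Quotient.mk x, rfl⟩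
  set e : (X ⧸ ker p) ≃ₗ[R] W := LinearEquiv.ofBijective pbar ⟨hinj, hsurj⟩ with he
  set sbar : (X ⧸ ker p) →ₗ[R] X := Submodule.liftQ (ker p) q (fun x hx => hq0 x hx) with hsbar
  refine ⟨sbar ∘ₗ (e.symm : W →ₗ[R] X ⧸ ker p), ?_⟩
  ext w
  obtain ⟨x, hx⟩ := Submodule.Quotient.mk_surjective (ker p) (e.symm w)
  have hw : p x = w := by
    have := congrArg e hx
    rw [LinearEquiv.apply_symm_apply] at this
    rw [← this]
    rfl
  simp only [LinearMap.comp_apply, LinearMap.id_apply, LinearEquiv.coe_coe]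
  rw [← hx]
  show p (sbar (Submodule.Quotient.mk x)) = w
  show p (q x) = w
  rw [hpq, hw]

/-- lift a map along a surjection whose kernel has vanishing Ext¹ against the source -/
theorem lift_of_surjective {Q P C : Type} [AddCommGroup Q] [Module R Q]
    [AddCommGroup P] [Module R P] [AddCommGroup C] [Module R C]
    (g : P →ₗ[R] C) (hg : Function.Surjective g)
    (hext : Ext1Zero R Q ↥(ker g)) (f : Q →ₗ[R] C) :
    ∃ k : Q →ₗ[R] P, g ∘ₗ k = f := by
  set T : Submodule R (P × Q) := ker (g ∘ₗ fst R P Q - f ∘ₗ snd R P Q) with hT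
  have memT : ∀ x : P × Q, x ∈ T ↔ g x.1 = f x.2 := by
    intro x
    rw [hT, mem_ker]
    constructor
    · intro h; have := sub_eq_zero.mp h; simpa using this
    · intro h; simp [h]
  set π2 : ↥T →ₗ[R] Q := (snd R P Q) ∘ₗ T.subtype with hπ2
  have hπ2surj : Function.Surjective π2 := by
    intro q
    obtain ⟨p, hp⟩ := hg (f q)
    exact ⟨⟨(p, q), (memT _).2 hp⟩, rfl⟩
  set ι : ↥(ker g) →ₗ[R] ↥T :=
    LinearMap.codRestrict T ((inl R P Q) ∘ₗ (ker g).subtype)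
      (fun x => (memT _).2 (by simp [x.2])) with hι
  have hιinj : Function.Injective ι := by
    intro a b hab
    have : ((inl R P Q) ∘ₗ (ker g).subtype) a = ((inl R P Q) ∘ₗ (ker g).subtype) b :=
      congrArg Subtype.val hab
    simp only [LinearMap.comp_apply] at this
    exact Subtype.ext (by simpa using congrArg Prod.fst this)
  have hexact : range ι = ker π2 := by
    ext x
    constructor
    · rintro ⟨a, rfl⟩
      simp [hπ2, hι]
    · intro hx
      have hx2 : (x : P × Q).2 = 0 := hx
      have hx1 : g (x : P × Q).1 = 0 := by
        have := (memT _).1 x.2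
        rw [hx2, map_zero] at this
        exact this
      refine ⟨⟨(x : P × Q).1, mem_ker.2 hx1⟩, ?_⟩
      apply Subtype.ext
      show ((x : P × Q).1, (0 : Q)) = (x : P × Q)
      rw [← hx2]
  obtain ⟨s, hs⟩ := hext ↥T ι π2 hιinj hπ2surj hexact
  refine ⟨(fst R P Q) ∘ₗ T.subtype ∘ₗ s, ?_⟩
  ext q
  have h1 : g ((s q : P × Q).1) = f ((s q : P × Q).2) := (memT _).1 (s q).2
  have h2 : (s q : P × Q).2 = q := by
    have := congrFun (congrArg (fun (m : Q →ₗ[R] Q) => (m : Q → Q)) hs) q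
    exact this
  show g ((s q : P × Q).1) = f q
  rw [h1, h2]

/-- closure of `Ext1Zero W ·` under extensions: `0 → B → A → G → 0`. -/
theorem ext1Zero_extension {W B A G : Type} [AddCommGroup W] [Module R W]
    [AddCommGroup B] [Module R B] [AddCommGroup A] [Module R A]
    [AddCommGroup G] [Module R G]
    (iB : B →ₗ[R] A) (pA : A →ₗ[R] G) (hiB : Function.Injective iB)
    (hpA : Function.Surjective pA) (hBA : range iB = ker pA)
    (hWB : Ext1Zero R W B) (hWG : Ext1Zero R W G) : Ext1Zero R W A := by
  intro X _ _ j p hj hp hex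
  set S : Submodule R X := range (j ∘ₗ iB) with hS
  set qS : X →ₗ[R] X ⧸ S := S.mkQ with hqS
  have hSker : S ≤ ker p := by
    rw [hS, ← hex]
    rintro x ⟨b, rfl⟩
    exact ⟨iB b, rfl⟩
  set pbar : (X ⧸ S) →ₗ[R] W := Submodule.liftQ S p hSker with hpbar
  have hkerpA : ker pA ≤ ker (qS ∘ₗ j) := by
    rw [← hBA]
    rintro a ⟨b, rfl⟩
    simp only [mem_ker, LinearMap.comp_apply, hqS]
    show Submodule.Quotient.mk (j (iB b)) = (0 : X ⧸ S)
    rw [Submodule.Quotient.mk_eq_zero]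
    exact ⟨b, rfl⟩
  set pAq : (A ⧸ ker pA) →ₗ[R] G := Submodule.liftQ (ker pA) pA (le_refl _) with hpAq
  have hpAqinj : Function.Injective pAq := by
    rw [← LinearMap.ker_eq_bot, hpAq, Submodule.ker_liftQ_eq_bot _ _ _ (le_refl _)]
  have hpAqsurj : Function.Surjective pAq := fun g => by
    obtain ⟨a, rfl⟩ := hpA g; exact ⟨Submodule.Quotient.mk a, rfl⟩
  set eG : (A ⧸ ker pA) ≃ₗ[R] G := LinearEquiv.ofBijective pAq ⟨hpAqinj, hpAqsurj⟩ with heG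
  set jbar : G →ₗ[R] X ⧸ S :=
    (Submodule.liftQ (ker pA) (qS ∘ₗ j) hkerpA) ∘ₗ (eG.symm : G →ₗ[R] A ⧸ ker pA) with hjbar
  have hjbar_spec : ∀ a : A, jbar (pA a) = qS (j a) := by
    intro a
    have h1 : eG.symm (pA a) = Submodule.Quotient.mk a := by
      apply eG.injective
      rw [LinearEquiv.apply_symm_apply]
      show pA a = pAq (Submodule.Quotient.mk a)
      rw [hpAq, Submodule.liftQ_apply]
    show (Submodule.liftQ (ker pA) (qS ∘ₗ j) hkerpA) (eG.symm (pA a)) = qS (j a)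
    rw [h1, Submodule.liftQ_apply]
    rfl
  have hjbarinj : Function.Injective jbar := by
    rw [injective_iff_map_eq_zero]
    intro g hg
    obtain ⟨a, rfl⟩ := hpA g
    rw [hjbar_spec] at hg
    have hg' : Submodule.Quotient.mk (j a) = (0 : X ⧸ S) := hg
    have : j a ∈ S := (Submodule.Quotient.mk_eq_zero S).1 hg'
    obtain ⟨b, hb⟩ := this
    have : a = iB b := hj hb.symm
    rw [this, ← mem_ker, ← hBA]
    exact ⟨b, rfl⟩
  have hpbarsurj : Function.Surjective pbar := by
    intro w
    obtain ⟨x, rfl⟩ := hp w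
    exact ⟨Submodule.Quotient.mk x, by rw [hpbar, Submodule.liftQ_apply]⟩
  have hexbar : range jbar = ker pbar := by
    ext ξ
    constructor
    · rintro ⟨g, rfl⟩
      obtain ⟨a, rfl⟩ := hpA g
      rw [hjbar_spec, mem_ker]
      show pbar (Submodule.Quotient.mk (j a)) = 0
      rw [hpbar, Submodule.liftQ_apply]
      have : j a ∈ ker p := by rw [← hex]; exact ⟨a, rfl⟩
      exact this
    · intro hξ
      obtain ⟨x, rfl⟩ := Submodule.Quotient.mk_surjective S ξ
      have hpx : p x = 0 := by
        have := mem_ker.1 hξ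
        rwa [hpbar, Submodule.liftQ_apply] at this
      have : x ∈ range j := by rw [hex]; exact hpx
      obtain ⟨a, rfl⟩ := this
      exact ⟨pA a, hjbar_spec a⟩
  obtain ⟨s1, hs1⟩ := hWG (X ⧸ S) jbar pbar hjbarinj hpbarsurj hexbar
  have hkerq : Ext1Zero R W ↥(ker qS) :=
    ext1Zero_of_equiv hWB
      ((LinearEquiv.ofInjective (j ∘ₗ iB) (hj.comp hiB)).trans
        (LinearEquiv.ofEq _ _ (by rw [hqS, Submodule.ker_mkQ, hS])))
  obtain ⟨t, ht⟩ := lift_of_surjective qS (Submodule.mkQ_surjective S) hkerq s1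
  refine ⟨t, ?_⟩
  ext w
  show p (t w) = w
  have h1 : qS (t w) = s1 w := congrArg (fun (m : W →ₗ[R] X ⧸ S) => m w) ht
  have h2 : p (t w) = pbar (qS (t w)) := by
    rw [hqS]
    show p (t w) = pbar (Submodule.Quotient.mk (t w))
    rw [hpbar, Submodule.liftQ_apply]
  rw [h2, h1]
  exact congrArg (fun (m : W →ₗ[R] W) => m w) hs1

/-- `𝒲⊥` is closed under cokernels of monomorphisms. -/
theorem perp_coker
    (hprec : ∀ (M : Type) [AddCommGroup M] [Module R M],
      ∃ (A B : ModuleCat.{0} R) (i : ↥B →ₗ[R] ↥A) (p : ↥A →ₗ[R] M),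
        MemPerpGI R ↥A ∧ MemPerpGIPerp R ↥B ∧
        Function.Injective i ∧ Function.Surjective p ∧
        LinearMap.range i = LinearMap.ker p)
    (hher : ∀ (A B : Type) [AddCommGroup A] [Module R A] [AddCommGroup B] [Module R B]
      (f : A →ₗ[R] B), Function.Surjective f → MemPerpGI R A → MemPerpGI R B →
      MemPerpGI R ↥(LinearMap.ker f))
    {B1 B2 C : Type} [AddCommGroup B1] [Module R B1] [AddCommGroup B2] [Module R B2]
    [AddCommGroup C] [Module R C]
    (ι : B1 →ₗ[R] B2) (π : B2 →ₗ[R] C) (hι : Function.Injective ι)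
    (hπ : Function.Surjective π) (hexact : range ι = ker π)
    (hB1 : MemPerpGIPerp R B1) (hB2 : MemPerpGIPerp R B2) :
    MemPerpGIPerp R C := by
  intro W _ _ hW
  intro X _ _ j p hj hp hex
  obtain ⟨A', B', i', h, hA'W, hB'perp, hi', hh, hex'⟩ := hprec X
  set pW : ↥A' →ₗ[R] W := p ∘ₗ h with hpW
  have hpWsurj : Function.Surjective pW := by
    intro w; obtain ⟨x, rfl⟩ := hp w; obtain ⟨a, rfl⟩ := hh x; exact ⟨a, rfl⟩
  set K := ker pW with hK
  have hKW : MemPerpGI R ↥K := hher _ _ pW hpWsurj hA'W hW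
  have hrange : ∀ k : ↥K, h (k : ↥A') ∈ range j := by
    intro k
    rw [hex, mem_ker]
    exact k.2
  set eJ : C ≃ₗ[R] ↥(range j) := LinearEquiv.ofInjective j hj with heJ
  set hKC : ↥K →ₗ[R] C :=
    (eJ.symm : ↥(range j) →ₗ[R] C) ∘ₗ
      (LinearMap.codRestrict (range j) (h ∘ₗ K.subtype) hrange) with hhKC
  have hKC_spec : ∀ k : ↥K, j (hKC k) = h (k : ↥A') := by
    intro k
    show j (eJ.symm ⟨h (k : ↥A'), hrange k⟩) = h (k : ↥A')
    have h1 : ∀ y : C, j y = ((eJ y : ↥(range j)) : X) := by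
      intro y; rw [heJ]; rfl
    rw [h1, LinearEquiv.apply_symm_apply]
  have hextK : Ext1Zero R ↥K ↥(ker π) :=
    ext1Zero_of_equiv (hB1 ↥K hKW)
      ((LinearEquiv.ofInjective ι hι).trans (LinearEquiv.ofEq _ _ hexact))
  obtain ⟨ψ, hψ⟩ := lift_of_surjective π hπ hextK hKC
  have hψ' : ∀ k : ↥K, π (ψ k) = hKC k :=
    fun k => congrArg (fun (m : ↥K →ₗ[R] C) => m k) hψ
  set Sp : Submodule R (B2 × ↥A') := range (LinearMap.prod ψ (-(K.subtype))) with hSp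
  set qY : (B2 × ↥A') →ₗ[R] _ := Sp.mkQ with hqY
  set iY : B2 →ₗ[R] (B2 × ↥A') ⧸ Sp := qY ∘ₗ inl R B2 ↥A' with hiY
  have hSpW : Sp ≤ ker (pW ∘ₗ snd R B2 ↥A') := by
    rintro x ⟨k, rfl⟩
    simp only [mem_ker, LinearMap.comp_apply, LinearMap.prod_apply, Pi.prod, snd_apply]
    show pW (-(K.subtype k)) = 0
    rw [map_neg]
    have : pW (K.subtype k) = 0 := k.2
    rw [this, neg_zero]
  set pY : ((B2 × ↥A') ⧸ Sp) →ₗ[R] W := Submodule.liftQ Sp (pW ∘ₗ snd R B2 ↥A') hSpW with hpY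
  have hSpX : Sp ≤ ker ((j ∘ₗ π ∘ₗ fst R B2 ↥A') + (h ∘ₗ snd R B2 ↥A')) := by
    rintro x ⟨k, rfl⟩
    simp only [mem_ker, LinearMap.add_apply, LinearMap.comp_apply, LinearMap.prod_apply,
      Pi.prod, fst_apply, snd_apply]
    show j (π (ψ k)) + h (-(K.subtype k)) = 0
    rw [hψ' k, hKC_spec k, map_neg]
    show h (k : ↥A') + -(h (k : ↥A')) = 0
    rw [add_neg_cancel]
  set τ : ((B2 × ↥A') ⧸ Sp) →ₗ[R] X :=
    Submodule.liftQ Sp ((j ∘ₗ π ∘ₗ fst R B2 ↥A') + (h ∘ₗ snd R B2 ↥A')) hSpX with hτ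
  have hiYinj : Function.Injective iY := by
    rw [injective_iff_map_eq_zero]
    intro b hb
    have : ((b, 0) : B2 × ↥A') ∈ Sp := by
      have := (Submodule.Quotient.mk_eq_zero Sp).1 hb
      exact this
    obtain ⟨k, hk⟩ := this
    have hk2 : -(K.subtype k) = 0 := congrArg Prod.snd hk
    have hk0 : k = 0 := by
      have : K.subtype k = 0 := by rwa [neg_eq_zero] at hk2
      exact Subtype.ext this
    have hk1 : ψ k = b := congrArg Prod.fst hk
    rw [← hk1, hk0, map_zero]
  have hpYsurj : Function.Surjective pY := by
    intro w
    obtain ⟨a, ha⟩ := hpWsurj w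
    refine ⟨qY (0, a), ?_⟩
    show pY (Submodule.Quotient.mk (0, a)) = w
    rw [hpY, Submodule.liftQ_apply]
    exact ha
  have hexY : range iY = ker pY := by
    ext ξ
    constructor
    · rintro ⟨b, rfl⟩
      show pY (Submodule.Quotient.mk ((b, 0) : B2 × ↥A')) = 0
      rw [hpY, Submodule.liftQ_apply]
      show pW 0 = 0
      rw [map_zero]
    · intro hξ
      obtain ⟨⟨b, a⟩, rfl⟩ := Submodule.Quotient.mk_surjective Sp ξ
      have hpa : pW a = 0 := by
        have := mem_ker.1 hξ
        rwa [hpY, Submodule.liftQ_apply] at this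
      set k : ↥K := ⟨a, mem_ker.2 hpa⟩ with hk
      refine ⟨b + ψ k, ?_⟩
      show Submodule.Quotient.mk ((b + ψ k, 0) : B2 × ↥A') = Submodule.Quotient.mk (b, a)
      rw [Submodule.Quotient.eq]
      refine ⟨k, ?_⟩
      show (ψ k, -(K.subtype k)) = (b + ψ k - b, 0 - a)
      have : K.subtype k = a := rfl
      rw [this]
      refine Prod.ext ?_ ?_ <;> simp
  obtain ⟨s', hs'⟩ := hB2 W hW _ iY pY hiYinj hpYsurj hexY
  refine ⟨τ ∘ₗ s', ?_⟩
  ext w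
  show p (τ (s' w)) = w
  obtain ⟨⟨b, a⟩, hba⟩ := Submodule.Quotient.mk_surjective Sp (s' w)
  rw [← hba]
  have h1 : τ (Submodule.Quotient.mk (b, a)) = j (π b) + h a := by
    rw [hτ, Submodule.liftQ_apply]; rfl
  rw [h1, map_add]
  have h2 : p (j (π b)) = 0 := by
    have : j (π b) ∈ ker p := by rw [← hex]; exact ⟨π b, rfl⟩
    exact this
  rw [h2, zero_add]
  have h3 : p (h a) = pY (Submodule.Quotient.mk (b, a)) := by
    rw [hpY, Submodule.liftQ_apply]; rfl
  rw [h3, hba]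
  exact congrArg (fun (m : W →ₗ[R] W) => m w) hs'

end Aux

/-- data of one step of the left injective resolution: `0 → B → E → Z → 0`. -/
structure LStepD (R : Type) [Ring R] (Z : ModuleCat.{0} R) where
  B : ModuleCat.{0} R
  E : ModuleCat.{0} R
  injE : Module.Injective R ↥E
  memB : MemPerpGIPerp R ↥B
  i : ↥B →ₗ[R] ↥E
  p : ↥E →ₗ[R] ↥Z
  inj_i : Function.Injective i
  surj_p : Function.Surjective p
  ex : LinearMap.range i = LinearMap.ker p

/-- data of one step of the right injective coresolution: `0 → Z → E → C → 0`. -/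
structure RStepD (R : Type) [Ring R] (Z : ModuleCat.{0} R) where
  E : ModuleCat.{0} R
  C : ModuleCat.{0} R
  injE : Module.Injective R ↥E
  memC : MemPerpGIPerp R ↥C
  i : ↥Z →ₗ[R] ↥E
  p : ↥E →ₗ[R] ↥C
  inj_i : Function.Injective i
  surj_p : Function.Surjective p
  ex : LinearMap.range i = LinearMap.ker p

section Steps

variable {R : Type} [Ring R]

theorem exists_lStep
    (hprec : ∀ (M : Type) [AddCommGroup M] [Module R M],
      ∃ (A B : ModuleCat.{0} R) (i : ↥B →ₗ[R] ↥A) (p : ↥A →ₗ[R] M),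
        MemPerpGI R ↥A ∧ MemPerpGIPerp R ↥B ∧
        Function.Injective i ∧ Function.Surjective p ∧
        LinearMap.range i = LinearMap.ker p)
    (hkernel : ∀ (M : Type) [AddCommGroup M] [Module R M],
      (MemPerpGI R M ∧ MemPerpGIPerp R M) ↔ Module.Injective R M)
    (Z : ModuleCat.{0} R) (hZ : MemPerpGIPerp R ↥Z) : Nonempty (LStepD R Z) := by
  obtain ⟨A, B, i, p, hA, hB, hi, hp, hexact⟩ := hprec ↥Z
  have hAperp : MemPerpGIPerp R ↥A := fun W _ _ hW =>
    ext1Zero_extension i p hi hp hexact (hB W hW) (hZ W hW)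
  exact ⟨⟨B, A, (hkernel ↥A).1 ⟨hA, hAperp⟩, hB, i, p, hi, hp, hexact⟩⟩

theorem exists_rStep
    (hprec : ∀ (M : Type) [AddCommGroup M] [Module R M],
      ∃ (A B : ModuleCat.{0} R) (i : ↥B →ₗ[R] ↥A) (p : ↥A →ₗ[R] M),
        MemPerpGI R ↥A ∧ MemPerpGIPerp R ↥B ∧
        Function.Injective i ∧ Function.Surjective p ∧
        LinearMap.range i = LinearMap.ker p)
    (hher : ∀ (A B : Type) [AddCommGroup A] [Module R A] [AddCommGroup B] [Module R B]
      (f : A →ₗ[R] B), Function.Surjective f → MemPerpGI R A → MemPerpGI R B →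
      MemPerpGI R ↥(LinearMap.ker f))
    (hkernel : ∀ (M : Type) [AddCommGroup M] [Module R M],
      (MemPerpGI R M ∧ MemPerpGIPerp R M) ↔ Module.Injective R M)
    (Z : ModuleCat.{0} R) (hZ : MemPerpGIPerp R ↥Z) : Nonempty (RStepD R Z) := by
  let J : ModuleCat.{0} R := CategoryTheory.Injective.under Z
  let f : ↥Z →ₗ[R] ↥J := (CategoryTheory.Injective.ι Z).hom
  have hmono : Function.Injective f :=
    (ModuleCat.mono_iff_injective (CategoryTheory.Injective.ι Z)).1 inferInstance
  have hJobj : CategoryTheory.Injective J := CategoryTheory.Injective.injective_under Z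
  have hJinj : Module.Injective R ↥J := by
    rw [Module.injective_iff_injective_object]
    convert hJobj
  let C : ModuleCat.{0} R := ModuleCat.of R (↥J ⧸ LinearMap.range f)
  let q : ↥J →ₗ[R] ↥C := (LinearMap.range f).mkQ
  have hq : Function.Surjective q := Submodule.mkQ_surjective _
  have hexact : LinearMap.range f = LinearMap.ker q := (Submodule.ker_mkQ _).symm
  have hJperp : MemPerpGIPerp R ↥J := ((hkernel ↥J).2 hJinj).2
  have hCperp : MemPerpGIPerp R ↥C :=
    perp_coker hprec hher f q hmono hq hexact hZ hJperp
  exact ⟨⟨J, C, hJinj, hCperp, f, q, hmono, hq, hexact⟩⟩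

end Steps

/-- submodules of `𝒲⊥`-modules... rather: bundled modules in `𝒲⊥`. -/
abbrev MPP (R : Type) [Ring R] := {Z : ModuleCat.{0} R // MemPerpGIPerp R ↥Z}

section Chains

variable {R : Type} [Ring R]
variable (lstep : ∀ s : MPP R, LStepD R s.1) (rstep : ∀ s : MPP R, RStepD R s.1)
variable (G0 : MPP R)

noncomputable def lchain : ℕ → MPP R := fun n =>
  Nat.rec G0 (fun _ prev => ⟨(lstep prev).B, (lstep prev).memB⟩) n

noncomputable def rchain : ℕ → MPP R := fun n =>
  Nat.rec G0 (fun _ prev => ⟨(rstep prev).C, (rstep prev).memC⟩) n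

noncomputable def ZI : ℤ → MPP R
  | .ofNat k => rchain rstep G0 k
  | .negSucc k => lchain lstep G0 (k + 1)

noncomputable def EI : ℤ → ModuleCat.{0} R
  | .ofNat k => (rstep (rchain rstep G0 k)).E
  | .negSucc k => (lstep (lchain lstep G0 k)).E

noncomputable def iI : ∀ n : ℤ, ↥(ZI lstep rstep G0 n).1 →ₗ[R] ↥(EI lstep rstep G0 n)
  | .ofNat k => (rstep (rchain rstep G0 k)).i
  | .negSucc k => (lstep (lchain lstep G0 k)).i

noncomputable def qI : ∀ n : ℤ, ↥(EI lstep rstep G0 n) →ₗ[R] ↥(ZI lstep rstep G0 (n + 1)).1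
  | .ofNat k => (rstep (rchain rstep G0 k)).p
  | .negSucc 0 => (lstep (lchain lstep G0 0)).p
  | .negSucc (k + 1) => (lstep (lchain lstep G0 (k + 1))).p

theorem EI_inj : ∀ n : ℤ, Module.Injective R ↥(EI lstep rstep G0 n)
  | .ofNat k => (rstep (rchain rstep G0 k)).injE
  | .negSucc k => (lstep (lchain lstep G0 k)).injE

theorem iI_inj : ∀ n : ℤ, Function.Injective (iI lstep rstep G0 n)
  | .ofNat k => (rstep (rchain rstep G0 k)).inj_i
  | .negSucc k => (lstep (lchain lstep G0 k)).inj_i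

theorem qI_surj : ∀ n : ℤ, Function.Surjective (qI lstep rstep G0 n)
  | .ofNat k => (rstep (rchain rstep G0 k)).surj_p
  | .negSucc 0 => (lstep (lchain lstep G0 0)).surj_p
  | .negSucc (k + 1) => (lstep (lchain lstep G0 (k + 1))).surj_p

theorem ZI_exact : ∀ n : ℤ,
    LinearMap.range (iI lstep rstep G0 n) = LinearMap.ker (qI lstep rstep G0 n)
  | .ofNat k => (rstep (rchain rstep G0 k)).ex
  | .negSucc 0 => (lstep (lchain lstep G0 0)).ex
  | .negSucc (k + 1) => (lstep (lchain lstep G0 (k + 1))).ex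

end Chains

/-- Let `𝒲 = ⊥𝒢ℐ`. If `(𝒲, 𝒲⊥)` is a complete hereditary cotorsion
pair (hereditarity being expressed by the equivalent property that `𝒲` is closed under
kernels of epimorphisms between its members) whose kernel `𝒲 ∩ 𝒲⊥` is the class of
injective modules, then `𝒲⊥ ⊆ 𝒢ℐ`. -/
theorem memPerpGIPerp_gorensteinInjective {R : Type} [Ring R]
    -- completeness: special 𝒲-precovers ...
    (hprec : ∀ (M : Type) [AddCommGroup M] [Module R M],
      ∃ (A B : ModuleCat.{0} R) (i : ↥B →ₗ[R] ↥A) (p : ↥A →ₗ[R] M),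
        MemPerpGI R ↥A ∧ MemPerpGIPerp R ↥B ∧
        Function.Injective i ∧ Function.Surjective p ∧
        LinearMap.range i = LinearMap.ker p)
    -- ... and special 𝒲⊥-preenvelopes
    (hpree : ∀ (M : Type) [AddCommGroup M] [Module R M],
      ∃ (B A : ModuleCat.{0} R) (i : M →ₗ[R] ↥B) (p : ↥B →ₗ[R] ↥A),
        MemPerpGIPerp R ↥B ∧ MemPerpGI R ↥A ∧
        Function.Injective i ∧ Function.Surjective p ∧
        LinearMap.range i = LinearMap.ker p)
    -- hereditary: 𝒲 is closed under kernels of epimorphisms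
    (hher : ∀ (A B : Type) [AddCommGroup A] [Module R A] [AddCommGroup B] [Module R B]
      (f : A →ₗ[R] B), Function.Surjective f → MemPerpGI R A → MemPerpGI R B →
      MemPerpGI R ↥(LinearMap.ker f))
    -- the kernel of the cotorsion pair is the class of injective modules
    (hkernel : ∀ (M : Type) [AddCommGroup M] [Module R M],
      (MemPerpGI R M ∧ MemPerpGIPerp R M) ↔ Module.Injective R M) :
    ∀ (G : Type) [AddCommGroup G] [Module R G],
      MemPerpGIPerp R G → IsGorensteinInjective R G := by
  intro G _ _ hG
  obtain ⟨lstep⟩ : Nonempty (∀ s : MPP R, LStepD R s.1) :=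
    ⟨fun s => (exists_lStep hprec hkernel s.1 s.2).some⟩
  obtain ⟨rstep⟩ : Nonempty (∀ s : MPP R, RStepD R s.1) :=
    ⟨fun s => (exists_rStep hprec hher hkernel s.1 s.2).some⟩
  refine ⟨EI lstep rstep ⟨ModuleCat.of R G, hG⟩,
    fun n => (iI lstep rstep ⟨ModuleCat.of R G, hG⟩ (n + 1)) ∘ₗ
      (qI lstep rstep ⟨ModuleCat.of R G, hG⟩ n),
    fun n => EI_inj lstep rstep ⟨ModuleCat.of R G, hG⟩ n, ?_, ?_, ?_⟩
  · -- exactness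
    intro n
    rw [range_comp, LinearMap.range_eq_top.2 (qI_surj lstep rstep _ n), Submodule.map_top]
    rw [LinearMap.ker_comp, LinearMap.ker_eq_bot.2 (iI_inj lstep rstep _ (n + 1 + 1)),
      Submodule.comap_bot]
    exact ZI_exact lstep rstep _ (n + 1)
  · -- total acyclicity
    intro Q _ _ hQinj n h hdh
    have hQW : MemPerpGI R Q := ((hkernel Q).2 hQinj).1
    have hq0 : ∀ x : Q, qI lstep rstep ⟨ModuleCat.of R G, hG⟩ (n + 1) (h x) = 0 := by
      intro x
      apply iI_inj lstep rstep _ (n + 1 + 1)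
      have := congrArg (fun (m : Q →ₗ[R] _) => m x) hdh
      simpa using this
    have hmem : ∀ x : Q, h x ∈ LinearMap.range (iI lstep rstep ⟨ModuleCat.of R G, hG⟩ (n + 1)) := by
      intro x
      rw [ZI_exact]
      exact hq0 x
    set eI := LinearEquiv.ofInjective (iI lstep rstep ⟨ModuleCat.of R G, hG⟩ (n + 1))
      (iI_inj lstep rstep _ (n + 1)) with heI
    set h' : Q →ₗ[R] ↥(ZI lstep rstep ⟨ModuleCat.of R G, hG⟩ (n + 1)).1 :=
      (eI.symm : ↥(LinearMap.range (iI lstep rstep ⟨ModuleCat.of R G, hG⟩ (n + 1))) →ₗ[R] _) ∘ₗ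
        (LinearMap.codRestrict _ h hmem) with hh'
    have hh'_spec : ∀ x : Q,
        iI lstep rstep ⟨ModuleCat.of R G, hG⟩ (n + 1) (h' x) = h x := by
      intro x
      show iI lstep rstep ⟨ModuleCat.of R G, hG⟩ (n + 1) (eI.symm ⟨h x, hmem x⟩) = h x
      have h1 : ∀ y, iI lstep rstep ⟨ModuleCat.of R G, hG⟩ (n + 1) y = ((eI y) : _) := by
        intro y; rw [heI]; rfl
      rw [h1, LinearEquiv.apply_symm_apply]
    have hextQ : Ext1Zero R Q ↥(LinearMap.ker (qI lstep rstep ⟨ModuleCat.of R G, hG⟩ n)) :=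
      ext1Zero_of_equiv ((ZI lstep rstep ⟨ModuleCat.of R G, hG⟩ n).2 Q hQW)
        ((LinearEquiv.ofInjective _ (iI_inj lstep rstep _ n)).trans
          (LinearEquiv.ofEq _ _ (ZI_exact lstep rstep _ n)))
    obtain ⟨k, hk⟩ := lift_of_surjective (qI lstep rstep ⟨ModuleCat.of R G, hG⟩ n)
      (qI_surj lstep rstep _ n) hextQ h'
    refine ⟨k, ?_⟩
    ext x
    show iI lstep rstep ⟨ModuleCat.of R G, hG⟩ (n + 1)
      (qI lstep rstep ⟨ModuleCat.of R G, hG⟩ n (k x)) = h x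
    have := congrArg (fun (m : Q →ₗ[R] _) => m x) hk
    simp only [LinearMap.comp_apply] at this
    rw [this]
    exact hh'_spec x
  · -- G ≅ ker (d 0)
    have hk : LinearMap.range (iI lstep rstep ⟨ModuleCat.of R G, hG⟩ 0) =
        LinearMap.ker ((iI lstep rstep ⟨ModuleCat.of R G, hG⟩ (0 + 1)) ∘ₗ
          (qI lstep rstep ⟨ModuleCat.of R G, hG⟩ 0)) := by
      rw [LinearMap.ker_comp, LinearMap.ker_eq_bot.2 (iI_inj lstep rstep _ (0 + 1)),
        Submodule.comap_bot]
      exact ZI_exact lstep rstep _ 0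
    exact ⟨(LinearEquiv.ofInjective _ (iI_inj lstep rstep ⟨ModuleCat.of R G, hG⟩ 0)).trans
      (LinearEquiv.ofEq _ _ hk)⟩
end
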